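/- arXiv:1908.03760 — 6 statements merged into one kernel-verified Lean document; each statement's English description precedes it below -/
import Mathlib

section
/- Let R be a commutative ring, let A be an n×n matrix, b an n×g matrix, c a g×n matrix, E a g×g matrix over R, and let t ∈ R. Then the (n+2g)×(n+2g) block matrix Z = [[A, b, 0], [c, E, t·I_g], [0, −I_g, 0]] (3×3 block structure with block sizes n, g, g) satisfies det Z = t^g · det A. -/
open Matrix


/-- For a commutative ring `R`, an `n×n` matrix `A`, an `n×g` matrix `b`,
a `g×n` matrix `c`, a `g×g` matrix `E` over `R` and `t ∈ R`, the `(n+2g)×(n+2g)` block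
matrix `Z = [[A, b, 0], [c, E, t·I_g], [0, −I_g, 0]]` satisfies `det Z = t^g · det A`. -/
theorem block_det_deletion {R : Type*} [CommRing R] (n g : ℕ)
    (A : Matrix (Fin n) (Fin n) R) (b : Matrix (Fin n) (Fin g) R)
    (c : Matrix (Fin g) (Fin n) R) (E : Matrix (Fin g) (Fin g) R) (t : R)
    (Z : Matrix ((Fin n ⊕ Fin g) ⊕ Fin g) ((Fin n ⊕ Fin g) ⊕ Fin g) R)
    (hZ : Z = Matrix.of fun i j =>
      match i, j with
      | .inl (.inl a), .inl (.inl a') => A a a'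
      | .inl (.inl a), .inl (.inr b') => b a b'
      | .inl (.inl _), .inr _ => 0
      | .inl (.inr i), .inl (.inl j) => c i j
      | .inl (.inr i), .inl (.inr j) => E i j
      | .inl (.inr i), .inr j => t * (1 : Matrix (Fin g) (Fin g) R) i j
      | .inr _, .inl (.inl _) => 0
      | .inr i, .inl (.inr j) => (-(1 : Matrix (Fin g) (Fin g) R)) i j
      | .inr _, .inr _ => 0) :
    Z.det = t ^ g * A.det := by
  classical
  -- Z as a 2x2 block matrix over the split ((n⊕g), g)
  have hZ' : Z = fromBlocks (fromBlocks A b c E) (fromRows 0 (t • 1))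
      (fromCols 0 (-1)) 0 := by
    subst hZ
    ext i j
    rcases i with (i | i) | i <;> rcases j with (j | j) | j <;>
      simp [fromBlocks, fromCols, Matrix.smul_apply, fromRows_apply_inl, fromRows_apply_inr]
  -- left elimination matrix
  set W : Matrix (Fin n ⊕ Fin g) (Fin g) R := fromRows b E with hW
  set L : Matrix ((Fin n ⊕ Fin g) ⊕ Fin g) ((Fin n ⊕ Fin g) ⊕ Fin g) R :=
    fromBlocks 1 W 0 1 with hL
  have hdetL : L.det = 1 := by
    rw [hL, det_fromBlocks_zero₂₁]; simp
  set D : Matrix (Fin g ⊕ Fin g) (Fin g ⊕ Fin g) R :=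
    fromBlocks 0 (t • 1) (-1) 0 with hD
  set F : Matrix (Fin n ⊕ (Fin g ⊕ Fin g)) (Fin n ⊕ (Fin g ⊕ Fin g)) R :=
    fromBlocks A 0 (fromRows c 0) D with hF
  have hLZ : L * Z = fromBlocks (fromBlocks A 0 c 0) (fromRows 0 (t • 1))
      (fromCols 0 (-1)) 0 := by
    rw [hL, hZ', fromBlocks_multiply, hW, fromRows_mul_fromCols]
    simp [fromBlocks_add]
  have hsub : L * Z = F.submatrix (Equiv.sumAssoc (Fin n) (Fin g) (Fin g))
      (Equiv.sumAssoc (Fin n) (Fin g) (Fin g)) := by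
    rw [hLZ, hF, hD]
    ext i j
    rcases i with (i | i) | i <;> rcases j with (j | j) | j <;>
      simp [fromBlocks, fromCols, Equiv.sumAssoc, fromRows_apply_inl, fromRows_apply_inr]
  have hdetD : D.det = t ^ g := by
    have hfac : D = (fromBlocks 1 1 0 1 : Matrix (Fin g ⊕ Fin g) (Fin g ⊕ Fin g) R) *
        fromBlocks 1 0 (-1) 1 * fromBlocks 1 1 0 1 * fromBlocks 1 0 0 (t • 1) := by
      simp [hD, fromBlocks_multiply]
    rw [hfac, det_mul, det_mul, det_mul, det_fromBlocks_zero₂₁, det_fromBlocks_zero₁₂,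
      det_fromBlocks_zero₂₁]
    simp [det_smul]
  have : (L * Z).det = F.det := by rw [hsub, det_submatrix_equiv_self]
  rw [det_mul, hdetL, one_mul] at this
  rw [this, hF, det_fromBlocks_zero₁₂, hdetD, mul_comm]
end

section
/- Let R be a commutative ring, V an N×N matrix over R, and w ≥ 1 an integer. Let P be the wN×wN block matrix (w×w blocks of size N×N) with P_{ii} = I_N for all i, P_{i,i−1} = −I_N for 2 ≤ i ≤ w, and all other blocks zero. Then P·S_w(V)·Pᵀ = X, where X is the wN×wN block matrix with X_{11} = V, X_{ii} = V − Vᵀ for 2 ≤ i ≤ w, X_{i,i−1} = −(V − Vᵀ) for 2 ≤ i ≤ w, and all other blocks zero. Moreover det P = 1, so S_w(V) and X are congruent and have equal determinants. -/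
open Matrix

/-- `S_w(V)`: the `wN×wN` block matrix with `(i,j)`-block `V` for `i ≤ j` and `Vᵀ` for `i > j`. -/
def cableS {R : Type*} [CommRing R] {ι : Type*} (w : ℕ) (V : Matrix ι ι R) :
    Matrix (Fin w × ι) (Fin w × ι) R :=
  Matrix.of fun i j => if i.1 ≤ j.1 then V i.2 j.2 else V j.2 i.2

/-- The congruence matrix `P`: identity blocks on the diagonal, `−I_N` on the first
subdiagonal, zero elsewhere. -/
def Pmat (R : Type*) [CommRing R] (N w : ℕ) : Matrix (Fin w × Fin N) (Fin w × Fin N) R :=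
  Matrix.of fun i j =>
    if i.1 = j.1 then (1 : Matrix (Fin N) (Fin N) R) i.2 j.2
    else if (j.1 : ℕ) + 1 = (i.1 : ℕ) then (-(1 : Matrix (Fin N) (Fin N) R)) i.2 j.2
    else 0

/-- The target matrix `X`: `(1,1)`-block `V`, diagonal blocks `V − Vᵀ` afterwards,
first subdiagonal blocks `−(V − Vᵀ)`, zero elsewhere. -/
def Xmat {R : Type*} [CommRing R] {N : ℕ} (w : ℕ) (V : Matrix (Fin N) (Fin N) R) :
    Matrix (Fin w × Fin N) (Fin w × Fin N) R :=
  Matrix.of fun i j =>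
    if i.1 = j.1 then (if (i.1 : ℕ) = 0 then V i.2 j.2 else (V - Vᵀ) i.2 j.2)
    else if (j.1 : ℕ) + 1 = (i.1 : ℕ) then (-(V - Vᵀ)) i.2 j.2
    else 0

/-- Scalar version of a row of `Pmat`. -/
def Pe {R : Type*} [CommRing R] {w : ℕ} (i k : Fin w) : R :=
  (if i = k then 1 else 0) - (if (k : ℕ) + 1 = (i : ℕ) then 1 else 0)

/-- Truncated predecessor inside `Fin w`. -/
def pred' {w : ℕ} (i : Fin w) : Fin w := ⟨(i : ℕ) - 1, by omega⟩

lemma sum_Pe_mul {R : Type*} [CommRing R] {w : ℕ} (i : Fin w) (g : Fin w → R) :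
    ∑ k, Pe i k * g k = g i - (if (i : ℕ) = 0 then 0 else g (pred' i)) := by
  simp only [Pe, sub_mul, ite_mul, one_mul, zero_mul, Finset.sum_sub_distrib,
    Finset.sum_ite_eq, Finset.mem_univ, if_true]
  congr 1
  split_ifs with h
  · apply Finset.sum_eq_zero; intro k _; split_ifs with hk
    · omega
    · rfl
  · rw [Finset.sum_eq_single (pred' i)]
    · simp only [pred']; exact if_pos (by omega)
    · intro k _ hk; split_ifs with h2
      · exfalso; apply hk; apply Fin.ext; simp only [pred']; omega
      · rfl
    · simp

lemma Pmat_eq {R : Type*} [CommRing R] {N w : ℕ} (x y : Fin w × Fin N) :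
    Pmat R N w x y = Pe x.1 y.1 * (if x.2 = y.2 then (1:R) else 0) := by
  simp only [Pmat, Pe, Matrix.of_apply, Matrix.one_apply, Matrix.neg_apply, Fin.ext_iff]
  split_ifs
  all_goals try ring
  all_goals exfalso; omega

lemma cable_entry {R : Type*} [CommRing R] {N w : ℕ} (V : Matrix (Fin N) (Fin N) R)
    (i j : Fin w) (a b : Fin N) :
    (Pmat R N w * cableS w V * (Pmat R N w)ᵀ) (i,a) (j,b)
      = ∑ k : Fin w, ∑ l : Fin w,
          Pe i k * ((if (k : ℕ) ≤ (l : ℕ) then V a b else V b a) * Pe j l) := by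
  simp only [Matrix.mul_apply, Matrix.transpose_apply, Pmat_eq, Fintype.sum_prod_type,
    cableS, Matrix.of_apply]
  simp only [Finset.mul_sum, Finset.sum_mul, mul_ite, ite_mul, mul_zero, zero_mul, mul_one,
    one_mul]
  simp [Finset.sum_ite_eq, Finset.sum_ite_eq', mul_comm, mul_assoc, mul_left_comm]
  rw [Finset.sum_comm]

lemma cable_entry_eq {R : Type*} [CommRing R] {N w : ℕ} (V : Matrix (Fin N) (Fin N) R)
    (i j : Fin w) (a b : Fin N) :
    (∑ k : Fin w, ∑ l : Fin w,
        Pe i k * ((if (k : ℕ) ≤ (l : ℕ) then V a b else V b a) * Pe j l))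
      = Xmat w V (i,a) (j,b) := by
  set T : Fin w → Fin w → R := fun k l => if (k : ℕ) ≤ (l : ℕ) then V a b else V b a with hT
  have inner : ∀ k, ∑ l : Fin w, T k l * Pe j l
      = T k j - (if (j : ℕ) = 0 then 0 else T k (pred' j)) := by
    intro k; rw [← sum_Pe_mul j (T k)]; exact Finset.sum_congr rfl fun l _ => mul_comm _ _
  have lhs : (∑ k : Fin w, ∑ l : Fin w, Pe i k * (T k l * Pe j l))
      = ∑ k : Fin w, Pe i k * (∑ l : Fin w, T k l * Pe j l) := by
    simp [Finset.mul_sum]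
  rw [lhs]
  simp only [inner]
  rw [sum_Pe_mul]
  simp only [hT, Xmat, Matrix.of_apply, Matrix.sub_apply, Matrix.transpose_apply,
    Matrix.neg_apply, pred', Fin.ext_iff]
  split_ifs
  all_goals try ring
  all_goals exfalso; omega

lemma Pmat_det {R : Type*} [CommRing R] (N w : ℕ) : (Pmat R N w).det = 1 := by
  have hbt : (Pmat R N w).BlockTriangular (fun x => -((x.1 : ℕ) : ℤ)) := by
    intro i j hij
    simp only [] at hij
    replace hij : (i.1 : ℕ) < (j.1 : ℕ) := by omega
    simp only [Pmat, Matrix.of_apply]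
    have h1 : ¬ i.1 = j.1 := by
      intro h; rw [Fin.ext_iff] at h; omega
    have h2 : ¬ ((j.1 : ℕ) + 1 = (i.1 : ℕ)) := by omega
    simp [h1, h2]
  rw [hbt.det]
  apply Finset.prod_eq_one
  intro a _
  have : (Pmat R N w).toSquareBlock (fun x => -((x.1 : ℕ) : ℤ)) a = 1 := by
    ext x y
    have hx := x.2; have hy := y.2
    simp only [Matrix.toSquareBlock_def] at *
    have hxy : (x.1.1 : ℕ) = (y.1.1 : ℕ) := by omega
    simp only [Pmat, Matrix.of_apply, Matrix.one_apply, Fin.ext_iff, hxy, if_pos rfl,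
      Subtype.ext_iff, Prod.ext_iff]
    split_ifs <;> simp_all [Fin.ext_iff]
  rw [this, Matrix.det_one]

/-- `P·S_w(V)·Pᵀ = X` and `det P = 1`; in particular `S_w(V)` and `X` are
congruent and have equal determinants. -/
theorem cableS_congruent_to_Xmat {R : Type*} [CommRing R] (N w : ℕ) (hw : 1 ≤ w)
    (V : Matrix (Fin N) (Fin N) R) :
    Pmat R N w * cableS w V * (Pmat R N w)ᵀ = Xmat w V ∧ (Pmat R N w).det = 1 := by
  refine ⟨?_, Pmat_det N w⟩
  ext ⟨i, a⟩ ⟨j, b⟩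
  rw [cable_entry, cable_entry_eq]
end

section
/- Let R be a commutative ring, V an N×N matrix over R, and w ≥ 1 an integer. Then det S_w(V) = det V · (det(V − Vᵀ))^{w−1}. -/
open Matrix

def splitEquiv (w N : ℕ) : (Fin N ⊕ (Fin w × Fin N)) ≃ (Fin (w + 1) × Fin N) where
  toFun x := x.elim (fun a => (0, a)) (fun p => (p.1.succ, p.2))
  invFun p := Fin.cases (Sum.inl p.2) (fun k => Sum.inr (k, p.2)) p.1
  left_inv := by rintro (a | ⟨k, a⟩) <;> simp
  right_inv := by
    rintro ⟨i, a⟩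
    induction i using Fin.cases <;> simp

def oneProdEquiv (N : ℕ) : (Fin 1 × Fin N) ≃ Fin N :=
  ⟨Prod.snd, fun a => (0, a), by rintro ⟨i, a⟩; exact Prod.ext (Subsingleton.elim _ _) rfl,
    fun a => rfl⟩

lemma det_cableS_succ {R : Type*} [CommRing R] (N w : ℕ) (hw : 0 < w)
    (V : Matrix (Fin N) (Fin N) R) :
    (cableS (w + 1) V).det = (V - Vᵀ).det * (cableS w V).det := by
  classical
  set z : Fin w := ⟨0, hw⟩ with hz
  set B : Matrix (Fin N) (Fin w × Fin N) R := Matrix.of fun a q => V a q.2 with hB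
  set C : Matrix (Fin w × Fin N) (Fin N) R := Matrix.of fun q b => V b q.2 with hC
  set D := cableS w V with hD
  have hsub : (cableS (w + 1) V).submatrix (splitEquiv w N) (splitEquiv w N)
      = fromBlocks V B C D := by
    ext p q
    rcases p with a | ⟨k, a⟩ <;> rcases q with b | ⟨j, b⟩ <;>
      simp [splitEquiv, cableS, fromBlocks, hB, hC, hD, Fin.le_zero_iff,
        Fin.succ_ne_zero, Fin.succ_le_succ_iff]
  set F : Matrix (Fin N) (Fin w × Fin N) R :=
    Matrix.of fun a q => if q = (z, a) then (-1 : R) else 0 with hF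
  have hFC : F * C = -Vᵀ := by
    ext a b
    rw [Matrix.mul_apply, Finset.sum_eq_single ((z, a))]
    · simp [hF, hC]
    · intro x _ hx; simp [hF, hx]
    · intro h; exact absurd (Finset.mem_univ _) h
  have hFD : F * D = -B := by
    ext a q
    rcases q with ⟨j, b⟩
    rw [Matrix.mul_apply, Finset.sum_eq_single ((z, a))]
    · have hzj : z ≤ j := by simp [hz, Fin.le_def]
      simp [hF, hD, hB, cableS, hzj]
    · intro x _ hx; simp [hF, hx]
    · intro h; exact absurd (Finset.mem_univ _) h
  have hL : fromBlocks (1 : Matrix (Fin N) (Fin N) R) F 0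
        (1 : Matrix (Fin w × Fin N) (Fin w × Fin N) R) * fromBlocks V B C D
      = fromBlocks (V - Vᵀ) 0 C D := by
    rw [Matrix.fromBlocks_multiply]
    simp [hFC, hFD, sub_eq_add_neg]
  have hdet : (fromBlocks (V - Vᵀ) (0 : Matrix (Fin N) (Fin w × Fin N) R) C D).det
      = (fromBlocks V B C D).det := by
    rw [← hL, Matrix.det_mul, Matrix.det_fromBlocks_zero₂₁, Matrix.det_one, Matrix.det_one,
      one_mul, one_mul]
  calc (cableS (w + 1) V).det
      = ((cableS (w + 1) V).submatrix (splitEquiv w N) (splitEquiv w N)).det :=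
        (Matrix.det_submatrix_equiv_self _ _).symm
    _ = (fromBlocks V B C D).det := by rw [hsub]
    _ = (fromBlocks (V - Vᵀ) (0 : Matrix (Fin N) (Fin w × Fin N) R) C D).det := hdet.symm
    _ = (V - Vᵀ).det * D.det := Matrix.det_fromBlocks_zero₁₂ _ _ _

/-- `det S_w(V) = det V · (det(V − Vᵀ))^{w−1}`. -/
theorem det_cableS {R : Type*} [CommRing R] (N w : ℕ) (hw : 1 ≤ w)
    (V : Matrix (Fin N) (Fin N) R) :
    (cableS w V).det = V.det * ((V - Vᵀ).det) ^ (w - 1) := by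
  induction w, hw using Nat.le_induction with
  | base =>
    have h : cableS 1 V = V.submatrix (oneProdEquiv N) (oneProdEquiv N) := by
      ext p q
      rcases p with ⟨i, a⟩; rcases q with ⟨j, b⟩
      simp [cableS, oneProdEquiv, Subsingleton.elim i j]
    rw [h, Matrix.det_submatrix_equiv_self]
    simp
  | succ w hw ih =>
    rw [det_cableS_succ N w hw, ih, Nat.add_sub_cancel]
    have hp : (V - Vᵀ).det ^ w = (V - Vᵀ).det * (V - Vᵀ).det ^ (w - 1) := by
      rw [← pow_succ', Nat.sub_add_cancel hw]
    rw [hp]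
    ring
end

section
/- Let V be a 2n×2n integer matrix with det(V − Vᵀ) = 1, and let w ≥ 1 be an integer. Then, as polynomials in ℤ[t], det(t·S_w(V) − S_w(V)ᵀ) = det(t^w·V − Vᵀ). (Here t·S_w(V) − S_w(V)ᵀ is a 2nw×2nw matrix over ℤ[t], and t^w·V − Vᵀ is a 2n×2n matrix over ℤ[t].) -/
open Matrix Polynomial

section CableAuxSection
open Finset
open scoped Kronecker

namespace CableAux


variable {K : Type*} [Field K]

def matA (w : ℕ) (τ : K) : Matrix (Fin w) (Fin w) K :=
  Matrix.of fun i j => if (i : ℕ) = j then τ else if (i : ℕ) < j then τ - 1 else 0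

def matB (w : ℕ) (τ : K) : Matrix (Fin w) (Fin w) K :=
  Matrix.of fun i j => if (i : ℕ) = j then -1 else if (j : ℕ) < i then τ - 1 else 0

def matP (w : ℕ) : Matrix (Fin w) (Fin w) K :=
  Matrix.of fun i j => if (i : ℕ) = j then 1 else if (j : ℕ) = (i : ℕ) + 1 then -1 else 0

def matQ (w : ℕ) (τ : K) : Matrix (Fin w) (Fin w) K :=
  Matrix.of fun i j => if (i : ℕ) ≤ j then τ⁻¹ ^ ((j : ℕ) - i) else 0

lemma geom (τ : K) (n : ℕ) : (τ - 1) * ∑ k ∈ range n, τ ^ k = τ ^ n - 1 := by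
  rw [mul_comm, geom_sum_mul]

lemma inv_pow_sub {τ : K} (hτ : τ ≠ 0) {k J : ℕ} (h : k ≤ J) :
    τ⁻¹ ^ (J - k) = τ ^ k * τ⁻¹ ^ J := by
  have h1 : τ ^ k * τ⁻¹ ^ J = τ ^ k * (τ⁻¹ ^ k * τ⁻¹ ^ (J - k)) := by
    rw [← pow_add, Nat.add_sub_cancel' h]
  rw [h1, ← mul_assoc, ← mul_pow, mul_inv_cancel₀ hτ, one_pow, one_mul]

lemma pow_mul_inv_pow {τ : K} (hτ : τ ≠ 0) (J : ℕ) : τ ^ J * τ⁻¹ ^ J = 1 := by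
  rw [← mul_pow, mul_inv_cancel₀ hτ, one_pow]

lemma sumA {τ : K} (hτ : τ ≠ 0) {w I J : ℕ} (hJ : J < w) :
    ∑ k ∈ range w, (if I = k then τ else if I < k then τ - 1 else 0) *
      (if k ≤ J then τ⁻¹ ^ (J - k) else 0) = if I ≤ J then τ else 0 := by
  rw [← Finset.sum_subset (Finset.range_subset_range.2 hJ)
    (fun x _ hx => by
      have hxe : ¬ x ≤ J := by simpa [Nat.lt_succ_iff] using hx
      rw [if_neg hxe, mul_zero])]
  by_cases hIJ : I ≤ J
  · rw [if_pos hIJ]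
    have hcong : ∀ k ∈ range (J + 1),
        (if I = k then τ else if I < k then τ - 1 else 0) * (if k ≤ J then τ⁻¹ ^ (J - k) else 0)
        = ((if I = k then τ else if I < k then τ - 1 else 0) * τ ^ k) * τ⁻¹ ^ J := by
      intro k hk
      have hkJ : k ≤ J := by simpa [Nat.lt_succ_iff] using hk
      rw [if_pos hkJ, inv_pow_sub hτ hkJ]; ring
    rw [Finset.sum_congr rfl hcong, ← Finset.sum_mul]
    have hsplit : ∑ k ∈ range (J + 1),
        (if I = k then τ else if I < k then τ - 1 else 0) * τ ^ k = τ ^ (J + 1) := by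
      rw [← Finset.sum_range_add_sum_Ico _ (show I + 1 ≤ J + 1 by omega)]
      have h1 : ∑ k ∈ range (I + 1),
          (if I = k then τ else if I < k then τ - 1 else 0) * τ ^ k = τ ^ (I + 1) := by
        rw [Finset.sum_eq_single_of_mem I (Finset.self_mem_range_succ I)]
        · rw [if_pos rfl, ← pow_succ']
        · intro k hk hne
          have : k ≤ I := by simpa [Nat.lt_succ_iff] using hk
          rw [if_neg (by omega), if_neg (by omega), zero_mul]
      have h2 : ∑ k ∈ Ico (I + 1) (J + 1),
          (if I = k then τ else if I < k then τ - 1 else 0) * τ ^ k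
          = τ ^ (J + 1) - τ ^ (I + 1) := by
        have hc : ∀ k ∈ Ico (I + 1) (J + 1),
            (if I = k then τ else if I < k then τ - 1 else 0) * τ ^ k = (τ - 1) * τ ^ k := by
          intro k hk
          rw [mem_Ico] at hk
          rw [if_neg (by omega), if_pos (by omega)]
        have hIco : ∑ k ∈ Ico (I + 1) (J + 1), τ ^ k
            = ∑ k ∈ range (J + 1), τ ^ k - ∑ k ∈ range (I + 1), τ ^ k :=
          eq_sub_of_add_eq' (Finset.sum_range_add_sum_Ico _ (by omega))
        rw [Finset.sum_congr rfl hc, ← Finset.mul_sum, hIco, mul_sub, geom, geom]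
        ring
      rw [h1, h2]; ring
    rw [hsplit]
    calc τ ^ (J + 1) * τ⁻¹ ^ J = (τ ^ J * τ⁻¹ ^ J) * τ := by ring
    _ = τ := by rw [pow_mul_inv_pow hτ, one_mul]
  · rw [if_neg hIJ]
    apply Finset.sum_eq_zero
    intro k hk
    have : k ≤ J := by simpa [Nat.lt_succ_iff] using hk
    rw [if_neg (by omega), if_neg (by omega), zero_mul]

lemma sumB {τ : K} (hτ : τ ≠ 0) {w I J : ℕ} (hJ : J < w) (hIJ : I ≤ J + 1) :
    ∑ k ∈ range w, (if I = k then -1 else if k < I then τ - 1 else 0) *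
      (if k ≤ J then τ⁻¹ ^ (J - k) else 0)
    = if I ≤ J then -τ⁻¹ ^ J else τ - τ⁻¹ ^ J := by
  rw [← Finset.sum_subset (Finset.range_subset_range.2 hJ)
    (fun x _ hx => by
      have hxe : ¬ x ≤ J := by simpa [Nat.lt_succ_iff] using hx
      rw [if_neg hxe, mul_zero])]
  have hcong : ∀ k ∈ range (J + 1),
      (if I = k then -1 else if k < I then τ - 1 else 0) * (if k ≤ J then τ⁻¹ ^ (J - k) else 0)
      = ((if I = k then -1 else if k < I then τ - 1 else 0) * τ ^ k) * τ⁻¹ ^ J := by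
    intro k hk
    have hkJ : k ≤ J := by simpa [Nat.lt_succ_iff] using hk
    rw [if_pos hkJ, inv_pow_sub hτ hkJ]; ring
  rw [Finset.sum_congr rfl hcong, ← Finset.sum_mul]
  by_cases hle : I ≤ J
  · rw [if_pos hle]
    have hsplit : ∑ k ∈ range (J + 1),
        (if I = k then -1 else if k < I then τ - 1 else 0) * τ ^ k = -1 := by
      rw [← Finset.sum_range_add_sum_Ico _ (show I + 1 ≤ J + 1 by omega)]
      have h2 : ∑ k ∈ Ico (I + 1) (J + 1),
          (if I = k then -1 else if k < I then τ - 1 else 0) * τ ^ k = 0 := by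
        apply Finset.sum_eq_zero
        intro k hk
        rw [mem_Ico] at hk
        rw [if_neg (by omega), if_neg (by omega), zero_mul]
      have h1 : ∑ k ∈ range (I + 1),
          (if I = k then -1 else if k < I then τ - 1 else 0) * τ ^ k = -1 := by
        rw [Finset.sum_range_succ, if_pos rfl]
        have hc : ∀ k ∈ range I,
            (if I = k then -1 else if k < I then τ - 1 else 0) * τ ^ k = (τ - 1) * τ ^ k := by
          intro k hk
          rw [mem_range] at hk
          rw [if_neg (by omega), if_pos hk]
        rw [Finset.sum_congr rfl hc, ← Finset.mul_sum, geom]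
        ring
      rw [h1, h2]; ring
    rw [hsplit]; ring
  · rw [if_neg hle]
    have hI : I = J + 1 := by omega
    have hsplit : ∑ k ∈ range (J + 1),
        (if I = k then -1 else if k < I then τ - 1 else 0) * τ ^ k = τ ^ (J + 1) - 1 := by
      have hc : ∀ k ∈ range (J + 1),
          (if I = k then -1 else if k < I then τ - 1 else 0) * τ ^ k = (τ - 1) * τ ^ k := by
        intro k hk
        rw [mem_range] at hk
        rw [if_neg (by omega), if_pos (by omega)]
      rw [Finset.sum_congr rfl hc, ← Finset.mul_sum, geom]
    rw [hsplit, sub_mul, one_mul]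
    have : τ ^ (J + 1) * τ⁻¹ ^ J = τ := by
      calc τ ^ (J + 1) * τ⁻¹ ^ J = (τ ^ J * τ⁻¹ ^ J) * τ := by ring
      _ = τ := by rw [pow_mul_inv_pow hτ, one_mul]
    rw [this]




lemma AQ_apply {w : ℕ} {τ : K} (hτ : τ ≠ 0) (i j : Fin w) :
    (matA w τ * matQ w τ) i j = if (i : ℕ) ≤ j then τ else 0 := by
  rw [Matrix.mul_apply]
  exact (Fin.sum_univ_eq_sum_range
    (fun k : ℕ => (if (i : ℕ) = k then τ else if (i : ℕ) < k then τ - 1 else 0) *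
      (if k ≤ (j : ℕ) then τ⁻¹ ^ ((j : ℕ) - k) else 0)) w).trans (sumA hτ j.isLt)

lemma BQ_apply {w : ℕ} {τ : K} (hτ : τ ≠ 0) (i j : Fin w) (hij : (i : ℕ) ≤ (j : ℕ) + 1) :
    (matB w τ * matQ w τ) i j = if (i : ℕ) ≤ j then -τ⁻¹ ^ (j : ℕ) else τ - τ⁻¹ ^ (j : ℕ) := by
  rw [Matrix.mul_apply]
  exact (Fin.sum_univ_eq_sum_range
    (fun k : ℕ => (if (i : ℕ) = k then -1 else if k < (i : ℕ) then τ - 1 else 0) *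
      (if k ≤ (j : ℕ) then τ⁻¹ ^ ((j : ℕ) - k) else 0)) w).trans (sumB hτ j.isLt hij)

lemma rowP {w : ℕ} (g : Fin w → K) (i : Fin w) :
    ∑ k, (matP w : Matrix (Fin w) (Fin w) K) i k * g k
      = g i - (if h : (i : ℕ) + 1 < w then g ⟨(i : ℕ) + 1, h⟩ else 0) := by
  have hsum : ∀ k : Fin w, (matP w : Matrix (Fin w) (Fin w) K) i k * g k
      = (if i = k then g k else 0) + (if (k : ℕ) = (i : ℕ) + 1 then -g k else 0) := by
    intro k
    show (if (i : ℕ) = k then (1:K) else if (k : ℕ) = (i : ℕ) + 1 then -1 else 0) * g k = _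
    rcases eq_or_ne i k with rfl | hne
    · rw [if_pos rfl, if_pos rfl, if_neg (by omega), one_mul, add_zero]
    · rw [if_neg (fun hv => hne (Fin.ext hv)), if_neg hne]
      by_cases hk : (k : ℕ) = (i : ℕ) + 1
      · rw [if_pos hk, if_pos hk]; ring
      · rw [if_neg hk, if_neg hk, zero_mul, add_zero]
  rw [Finset.sum_congr rfl (fun k _ => hsum k), Finset.sum_add_distrib]
  have h1 : ∑ k, (if i = k then g k else 0) = g i := by
    rw [Finset.sum_ite_eq]
    exact if_pos (Finset.mem_univ i)
  rw [h1, sub_eq_add_neg]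
  congr 1
  by_cases h : (i : ℕ) + 1 < w
  · rw [dif_pos h, Finset.sum_eq_single (⟨(i : ℕ) + 1, h⟩ : Fin w)]
    · rw [if_pos rfl]
    · intro k _ hne
      exact if_neg (fun hv => hne (Fin.ext hv))
    · intro habs; exact absurd (Finset.mem_univ _) habs
  · rw [dif_neg h, neg_zero]
    apply Finset.sum_eq_zero
    intro k _
    have := k.isLt
    rw [if_neg (by omega)]

lemma PAQ_apply {w : ℕ} {τ : K} (hτ : τ ≠ 0) (i j : Fin w) :
    ((matP w : Matrix (Fin w) (Fin w) K) * (matA w τ * matQ w τ)) i j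
      = if i = j then τ else 0 := by
  have h0 : ((matP w : Matrix (Fin w) (Fin w) K) * (matA w τ * matQ w τ)) i j
      = (matA w τ * matQ w τ) i j
        - (if h : (i : ℕ) + 1 < w then (matA w τ * matQ w τ) ⟨(i : ℕ) + 1, h⟩ j else 0) :=
    (Matrix.mul_apply).trans (rowP (fun k => (matA w τ * matQ w τ) k j) i)
  rw [h0]
  simp only [AQ_apply hτ, Fin.ext_iff, Fin.val_mk]
  have hi := i.isLt
  have hj := j.isLt
  split_ifs <;> first | ring1 | (exfalso; omega)

lemma PBQ_apply {w : ℕ} {τ : K} (hτ : τ ≠ 0) (i j : Fin w) (hij : (i : ℕ) ≤ j) :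
    ((matP w : Matrix (Fin w) (Fin w) K) * (matB w τ * matQ w τ)) i j
      = if i = j then (if (i : ℕ) = w - 1 then -τ⁻¹ ^ (w - 1) else -τ) else 0 := by
  have h0 : ((matP w : Matrix (Fin w) (Fin w) K) * (matB w τ * matQ w τ)) i j
      = (matB w τ * matQ w τ) i j
        - (if h : (i : ℕ) + 1 < w then (matB w τ * matQ w τ) ⟨(i : ℕ) + 1, h⟩ j else 0) :=
    (Matrix.mul_apply).trans (rowP (fun k => (matB w τ * matQ w τ) k j) i)
  rw [h0]
  have hi := i.isLt
  have hj := j.isLt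
  by_cases h : (i : ℕ) + 1 < w
  · rw [dif_pos h, BQ_apply hτ i j (by omega),
      BQ_apply hτ ⟨(i : ℕ) + 1, h⟩ j (by simp only [Fin.val_mk]; omega)]
    simp only [Fin.ext_iff, Fin.val_mk]
    split_ifs <;> first | ring1 | (exfalso; omega)
  · rw [dif_neg h, BQ_apply hτ i j (by omega), sub_zero]
    have heq : (i : ℕ) = (j : ℕ) := by omega
    have hw1 : (i : ℕ) = w - 1 := by omega
    rw [if_pos (by omega : (i : ℕ) ≤ (j : ℕ)), if_pos (Fin.ext heq), if_pos hw1,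
      show (j : ℕ) = w - 1 by omega]

lemma detP (w : ℕ) : (matP w : Matrix (Fin w) (Fin w) K).det = 1 := by
  have ht : (matP w : Matrix (Fin w) (Fin w) K).BlockTriangular id := by
    intro i j hji
    have hv : (j : ℕ) < (i : ℕ) := hji
    show (if (i : ℕ) = j then (1:K) else if (j : ℕ) = (i : ℕ) + 1 then -1 else 0) = 0
    rw [if_neg (by omega), if_neg (by omega)]
  rw [Matrix.det_of_upperTriangular ht]
  apply Finset.prod_eq_one
  intro i _
  show (if (i : ℕ) = i then (1:K) else _) = 1
  rw [if_pos rfl]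

lemma detQ (w : ℕ) (τ : K) : (matQ w τ).det = 1 := by
  have ht : (matQ w τ).BlockTriangular id := by
    intro i j hji
    have hv : (j : ℕ) < (i : ℕ) := hji
    show (if (i : ℕ) ≤ j then τ⁻¹ ^ ((j : ℕ) - i) else 0) = 0
    rw [if_neg (by omega)]
  rw [Matrix.det_of_upperTriangular ht]
  apply Finset.prod_eq_one
  intro i _
  show (if (i : ℕ) ≤ i then τ⁻¹ ^ ((i : ℕ) - i) else 0) = 1
  rw [if_pos le_rfl, Nat.sub_self, pow_zero]


end CableAux

end CableAuxSection

open CableAux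
open scoped Kronecker


/-- for a `2n×2n` integer matrix `V` with `det(V − Vᵀ) = 1` and `w ≥ 1`,
`det(t·S_w(V) − S_w(V)ᵀ) = det(t^w·V − Vᵀ)` in `ℤ[t]`. -/
theorem alexander_poly_of_cable (n w : ℕ) (hw : 1 ≤ w)
    (V : Matrix (Fin (2 * n)) (Fin (2 * n)) ℤ) (h : (V - Vᵀ).det = 1) :
    ((X : ℤ[X]) • (cableS w V).map (fun a : ℤ => (a : ℤ[X]))
        - ((cableS w V)ᵀ).map (fun a : ℤ => (a : ℤ[X]))).det
      = (((X : ℤ[X]) ^ w) • V.map (fun a : ℤ => (a : ℤ[X]))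
        - Vᵀ.map (fun a : ℤ => (a : ℤ[X]))).det := by
  classical
  obtain ⟨m, rfl⟩ : ∃ m, w = m + 1 := ⟨w - 1, by omega⟩
  set K := FractionRing ℤ[X]
  set f : ℤ[X] →+* K := algebraMap ℤ[X] K with hfdef
  have hf : Function.Injective f := IsFractionRing.injective ℤ[X] K
  apply hf
  rw [RingHom.map_det, RingHom.map_det, RingHom.mapMatrix_apply, RingHom.mapMatrix_apply]
  set τ : K := f X with hτdef
  have hτ : τ ≠ 0 := fun h0 => Polynomial.X_ne_zero (hf (h0.trans (map_zero f).symm))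
  set W : Matrix (Fin (2 * n)) (Fin (2 * n)) K := V.map (fun a : ℤ => (a : K)) with hWdef
  -- Step A : identify the mapped cable matrix with A ⊗ W + B ⊗ Wᵀ
  have hM : (((X : ℤ[X]) • (cableS (m + 1) V).map (fun a : ℤ => (a : ℤ[X]))
        - ((cableS (m + 1) V)ᵀ).map (fun a : ℤ => (a : ℤ[X]))).map f)
      = matA (m + 1) τ ⊗ₖ W + matB (m + 1) τ ⊗ₖ Wᵀ := by
    ext ⟨i, x⟩ ⟨j, y⟩
    simp only [Matrix.map_apply, Matrix.sub_apply, Matrix.smul_apply, smul_eq_mul,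
      map_sub, _root_.map_mul, cableS, Matrix.of_apply, Matrix.transpose_apply,
      Matrix.kroneckerMap_apply, Matrix.add_apply, matA, matB, map_intCast, hWdef]
    rcases lt_trichotomy (i : ℕ) (j : ℕ) with hlt | heq | hgt
    · rw [if_pos (by exact (Fin.le_def).2 (le_of_lt hlt)), if_neg (by rw [Fin.le_def]; omega),
        if_neg (by omega), if_pos hlt, if_neg (by omega), if_neg (by omega)]
      ring
    · rw [if_pos ((Fin.le_def).2 (le_of_eq heq)), if_pos ((Fin.le_def).2 (le_of_eq heq.symm)),
        if_pos heq, if_pos heq]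
      ring
    · rw [if_neg (by rw [Fin.le_def]; omega), if_pos ((Fin.le_def).2 (le_of_lt hgt)),
        if_neg (by omega), if_neg (by omega), if_neg (by omega), if_pos hgt]
      ring
  rw [hM]
  -- Step B : multiply by P ⊗ 1 and Q ⊗ 1
  set P' : Matrix (Fin (m + 1) × Fin (2 * n)) (Fin (m + 1) × Fin (2 * n)) K :=
    (matP (m + 1) : Matrix (Fin (m + 1)) (Fin (m + 1)) K) ⊗ₖ (1 : Matrix (Fin (2 * n)) (Fin (2 * n)) K) with hP'
  set Q' : Matrix (Fin (m + 1) × Fin (2 * n)) (Fin (m + 1) × Fin (2 * n)) K :=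
    matQ (m + 1) τ ⊗ₖ (1 : Matrix (Fin (2 * n)) (Fin (2 * n)) K) with hQ'
  have hP'det : P'.det = 1 := by
    rw [hP', Matrix.det_kronecker, detP, Matrix.det_one, one_pow, one_pow, mul_one]
  have hQ'det : Q'.det = 1 := by
    rw [hQ', Matrix.det_kronecker, detQ, Matrix.det_one, one_pow, one_pow, mul_one]
  set N : Matrix (Fin (m + 1) × Fin (2 * n)) (Fin (m + 1) × Fin (2 * n)) K :=
    ((matP (m + 1) : Matrix (Fin (m + 1)) (Fin (m + 1)) K) * (matA (m + 1) τ * matQ (m + 1) τ)) ⊗ₖ W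
      + ((matP (m + 1) : Matrix (Fin (m + 1)) (Fin (m + 1)) K)
          * (matB (m + 1) τ * matQ (m + 1) τ)) ⊗ₖ Wᵀ with hN
  have hfact : P' * (matA (m + 1) τ ⊗ₖ W + matB (m + 1) τ ⊗ₖ Wᵀ) * Q' = N := by
    rw [hP', hQ', hN, Matrix.mul_add, Matrix.add_mul]
    simp only [← Matrix.mul_kronecker_mul, Matrix.one_mul, Matrix.mul_one, Matrix.mul_assoc]
  have hdet1 : (matA (m + 1) τ ⊗ₖ W + matB (m + 1) τ ⊗ₖ Wᵀ).det = N.det := by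
    rw [← hfact, Matrix.det_mul, Matrix.det_mul, hP'det, hQ'det, one_mul, mul_one]
  rw [hdet1]
  -- Step C : N is block lower triangular
  have hBT : (Nᵀ).BlockTriangular Prod.fst := by
    intro p q hpq
    show N q p = 0
    rw [hN]
    simp only [Matrix.add_apply, Matrix.kroneckerMap_apply]
    rw [PAQ_apply hτ, PBQ_apply hτ _ _ (le_of_lt hpq), if_neg (Fin.ne_of_lt hpq),
      if_neg (Fin.ne_of_lt hpq), zero_mul, zero_mul, add_zero]
  have hdet2 : N.det = ∏ a : Fin (m + 1),
      (τ • W - (if (a : ℕ) = m then τ⁻¹ ^ m else τ) • Wᵀ).det := by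
    rw [← Matrix.det_transpose N, hBT.det_fintype]
    refine Finset.prod_congr rfl fun a _ => ?_
    rw [← Matrix.det_submatrix_equiv_self
      (⟨fun x => ⟨(a, x), rfl⟩, fun p => p.1.2, fun x => rfl,
        by rintro ⟨⟨pa, px⟩, rfl⟩; rfl⟩ :
        Fin (2 * n) ≃ {p : Fin (m + 1) × Fin (2 * n) // p.1 = a}), ← Matrix.det_transpose
      (τ • W - (if (a : ℕ) = m then τ⁻¹ ^ m else τ) • Wᵀ)]
    congr 1
    ext x y
    simp only [Matrix.submatrix_apply, Matrix.toSquareBlock_def, Matrix.of_apply,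
      Equiv.coe_fn_mk, Matrix.transpose_apply, hN]
    simp only [Matrix.add_apply, Matrix.kroneckerMap_apply, Matrix.transpose_apply,
      Matrix.sub_apply, Matrix.smul_apply, smul_eq_mul]
    rw [PAQ_apply hτ, PBQ_apply hτ a a le_rfl, if_pos rfl, if_pos rfl]
    have : (m + 1 : ℕ) - 1 = m := by omega
    rw [this]
    split_ifs <;> ring
  rw [hdet2]
  -- Step D : compute the product
  have hWW : (W - Wᵀ).det = 1 := by
    have : W - Wᵀ = (V - Vᵀ).map (Int.castRingHom K) := by
      ext x y
      simp [hWdef, Matrix.map_apply, Matrix.sub_apply, Matrix.transpose_apply]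
    rw [this, ← RingHom.mapMatrix_apply, ← RingHom.map_det, h, _root_.map_one]
  have hc1 : ∀ i : Fin m, (τ • W - (if ((i.castSucc : Fin (m+1)) : ℕ) = m then τ⁻¹ ^ m else τ) • Wᵀ).det
      = τ ^ (2 * n) := by
    intro i
    rw [if_neg (by have := i.isLt; simp only [Fin.coe_castSucc]; omega), ← smul_sub,
      Matrix.det_smul, hWW, mul_one, Fintype.card_fin]
  rw [Fin.prod_univ_castSucc]
  simp only [hc1]
  rw [Finset.prod_const, Finset.card_univ, Fintype.card_fin,
    if_pos (by simp [Fin.val_last])]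
  -- Step E : right-hand side
  have hRHS : ((((X : ℤ[X]) ^ (m + 1)) • V.map (fun a : ℤ => (a : ℤ[X]))
      - Vᵀ.map (fun a : ℤ => (a : ℤ[X]))).map f) = τ ^ (m + 1) • W - Wᵀ := by
    ext x y
    simp only [Matrix.map_apply, Matrix.sub_apply, Matrix.smul_apply, smul_eq_mul,
      map_sub, _root_.map_mul, map_pow, Matrix.transpose_apply, map_intCast, hWdef, hτdef]
  rw [hRHS]
  -- Step F : final algebra
  have hsm : (τ ^ m) • (τ • W - τ⁻¹ ^ m • Wᵀ) = τ ^ (m + 1) • W - Wᵀ := by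
    rw [smul_sub, smul_smul, smul_smul, ← pow_succ,
      show τ ^ m * τ⁻¹ ^ m = 1 by rw [← mul_pow, mul_inv_cancel₀ hτ, one_pow], one_smul]
  calc (τ ^ (2 * n)) ^ m * (τ • W - τ⁻¹ ^ m • Wᵀ).det
      = (τ ^ m) ^ (2 * n) * (τ • W - τ⁻¹ ^ m • Wᵀ).det := by
        rw [← pow_mul, ← pow_mul, Nat.mul_comm]
    _ = ((τ ^ m) • (τ • W - τ⁻¹ ^ m • Wᵀ)).det := by
        rw [Matrix.det_smul, Fintype.card_fin]
    _ = (τ ^ (m + 1) • W - Wᵀ).det := by rw [hsm]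
end

section
/- Let V be a 2n×2n integer matrix that is Alexander trivial, i.e. det(t·V − Vᵀ) = tⁿ in ℤ[t]. Then for every integer w ≥ 1, the 2nw×2nw matrix S_w(V) is Alexander trivial: det(t·S_w(V) − S_w(V)ᵀ) = t^{nw} in ℤ[t]. -/
open Matrix Polynomial

/-- The Alexander determinant polynomial `det(t·B − Bᵀ)` of an integer square matrix `B`. -/
noncomputable def alexPoly {ι : Type*} [Fintype ι] [DecidableEq ι] (B : Matrix ι ι ℤ) : ℤ[X] :=
  ((X : ℤ[X]) • B.map (fun a : ℤ => (a : ℤ[X]))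
    - Bᵀ.map (fun a : ℤ => (a : ℤ[X]))).det

namespace CableAux

open Finset

variable {R : Type*} [CommRing R]

variable (R) in
/-- subdiagonal shift matrix -/
def Nm (w : ℕ) : Matrix (Fin w) (Fin w) R :=
  Matrix.of fun i k => if (k : ℕ) + 1 = (i : ℕ) then 1 else 0

variable (R) in
def Um (w : ℕ) : Matrix (Fin w) (Fin w) R :=
  Matrix.of fun i j => if (i : ℕ) < (j : ℕ) then 1 else 0

variable (R) in
def Lm (w : ℕ) : Matrix (Fin w) (Fin w) R :=
  Matrix.of fun i j => if (j : ℕ) < (i : ℕ) then 1 else 0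

def qm (t : R) (w : ℕ) : Matrix (Fin w) (Fin w) R :=
  Matrix.of fun k j => if (j : ℕ) ≤ (k : ℕ) then t ^ ((k : ℕ) - (j : ℕ)) else 0

def Gm (t : R) (w : ℕ) : Matrix (Fin w) (Fin w) R :=
  Matrix.of fun i j => if (i : ℕ) = 0 then
      (if (j : ℕ) = 0 then t ^ w else t ^ (w - (j : ℕ)) - 1)
    else if i = j then 1 else 0

def sm (t : R) (w : ℕ) : Matrix (Fin w) (Fin w) R :=
  Matrix.of fun i j => if (i : ℕ) = 0 then (if (j : ℕ) = 0 then t else t - 1)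
    else (if i = j then 1 else 0) - (if (j : ℕ) + 1 = (i : ℕ) then t else 0)

def rm (t : R) (w : ℕ) : Matrix (Fin w) (Fin w) R := 1 - t • Nm R w

lemma Nm_mul_apply {w : ℕ} (M : Matrix (Fin w) (Fin w) R) (i j : Fin w) :
    (Nm R w * M) i j = ∑ x : Fin w, if (x : ℕ) + 1 = (i : ℕ) then M x j else 0 := by
  simp [Nm, Matrix.mul_apply, ite_mul]

lemma Nm_mul_apply_zero {w : ℕ} (M : Matrix (Fin w) (Fin w) R) {i : Fin w}
    (h : (i : ℕ) = 0) (j : Fin w) : (Nm R w * M) i j = 0 := by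
  rw [Nm_mul_apply]
  exact Finset.sum_eq_zero fun x _ => by rw [if_neg (by omega)]

lemma Nm_mul_apply_succ {w : ℕ} (M : Matrix (Fin w) (Fin w) R) {i k : Fin w}
    (h : (i : ℕ) = (k : ℕ) + 1) (j : Fin w) : (Nm R w * M) i j = M k j := by
  rw [Nm_mul_apply]
  have hc : ∀ x : Fin w, ((x : ℕ) + 1 = (i : ℕ)) ↔ x = k := by
    intro x; rw [Fin.ext_iff]; omega
  simp_rw [hc]
  simp

lemma mul_Nm_apply {w : ℕ} (M : Matrix (Fin w) (Fin w) R) (i j : Fin w) :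
    (M * Nm R w) i j = ∑ x : Fin w, if (j : ℕ) + 1 = (x : ℕ) then M i x else 0 := by
  simp [Nm, Matrix.mul_apply, mul_ite]

lemma mul_Nm_apply_last {w : ℕ} (M : Matrix (Fin w) (Fin w) R) (i : Fin w) {j : Fin w}
    (h : (j : ℕ) + 1 = w) : (M * Nm R w) i j = 0 := by
  rw [mul_Nm_apply]
  exact Finset.sum_eq_zero fun x _ => by rw [if_neg (by omega)]

lemma mul_Nm_apply_succ {w : ℕ} (M : Matrix (Fin w) (Fin w) R) (i : Fin w) {j k : Fin w}
    (h : (k : ℕ) = (j : ℕ) + 1) : (M * Nm R w) i j = M i k := by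
  rw [mul_Nm_apply]
  have hc : ∀ x : Fin w, ((j : ℕ) + 1 = (x : ℕ)) ↔ x = k := by
    intro x; rw [Fin.ext_iff]; omega
  simp_rw [hc]
  simp


lemma rm_mul_qm (t : R) (w : ℕ) : rm t w * qm t w = 1 := by
  ext i j
  rw [rm, Matrix.sub_mul, Matrix.one_mul, Matrix.smul_mul, Matrix.sub_apply,
    Matrix.smul_apply, smul_eq_mul]
  by_cases hi : (i : ℕ) = 0
  · rw [Nm_mul_apply_zero _ hi, mul_zero, sub_zero]
    simp only [qm, of_apply, Matrix.one_apply]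
    split_ifs with h1 h2 h2 <;> first
      | (exfalso; simp only [Fin.ext_iff] at *; omega)
      | simp [show (i:ℕ) - (j:ℕ) = 0 by omega]
  · obtain ⟨m, hm⟩ := Nat.exists_eq_succ_of_ne_zero hi
    have hmw : m < w := by omega
    rw [Nm_mul_apply_succ _ (k := ⟨m, hmw⟩) (by simp [hm]) j]
    simp only [qm, of_apply, Matrix.one_apply]
    rcases lt_trichotomy (j : ℕ) (i : ℕ) with h | h | h
    · rw [if_pos (by omega), if_pos (by omega), if_neg (by rw [Fin.ext_iff]; omega)]
      have he : (i : ℕ) - (j : ℕ) = (m - (j : ℕ)) + 1 := by omega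
      rw [he, pow_succ]
      ring
    · rw [if_pos (by omega), if_neg (by omega), if_pos (by rw [Fin.ext_iff]; omega)]
      simp [show (i:ℕ) - (j:ℕ) = 0 by omega]
    · rw [if_neg (by omega), if_neg (by omega), if_neg (by rw [Fin.ext_iff]; omega)]
      simp

lemma qm_mul_rm (t : R) (w : ℕ) : qm t w * rm t w = 1 :=
  mul_eq_one_comm.mp (rm_mul_qm t w)

lemma pm_mul_right_U (t : R) (w : ℕ) :
    (1 - Nm R w) * (t • (1 : Matrix (Fin w) (Fin w) R) + (t - 1) • Um R w) = sm t w := by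
  ext i j
  rw [Matrix.sub_mul, Matrix.one_mul, Matrix.sub_apply]
  by_cases hi : (i : ℕ) = 0
  · rw [Nm_mul_apply_zero _ hi, sub_zero]
    simp only [sm, Um, Matrix.add_apply, Matrix.smul_apply, Matrix.one_apply, of_apply,
      smul_eq_mul, Fin.ext_iff]
    split_ifs <;>
      first
        | ring1
        | (exfalso; omega)
  · obtain ⟨m, hm⟩ := Nat.exists_eq_succ_of_ne_zero hi
    have hmw : m < w := by omega
    rw [Nm_mul_apply_succ _ (k := ⟨m, hmw⟩) (by simp [hm]) j]
    simp only [sm, Um, Matrix.add_apply, Matrix.smul_apply, Matrix.one_apply, of_apply,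
      smul_eq_mul, Fin.ext_iff]
    split_ifs <;>
      first
        | ring1
        | (exfalso; omega)

lemma pm_mul_right_L (t : R) (w : ℕ) :
    (1 - Nm R w) * ((1 : Matrix (Fin w) (Fin w) R) - (t - 1) • Lm R w) = rm t w := by
  ext i j
  rw [Matrix.sub_mul, Matrix.one_mul, Matrix.sub_apply]
  by_cases hi : (i : ℕ) = 0
  · rw [Nm_mul_apply_zero _ hi, sub_zero]
    simp only [rm, Lm, Nm, Matrix.sub_apply, Matrix.smul_apply, Matrix.one_apply, of_apply,
      smul_eq_mul, Fin.ext_iff]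
    split_ifs <;>
      first
        | ring1
        | (exfalso; omega)
  · obtain ⟨m, hm⟩ := Nat.exists_eq_succ_of_ne_zero hi
    have hmw : m < w := by omega
    rw [Nm_mul_apply_succ _ (k := ⟨m, hmw⟩) (by simp [hm]) j]
    simp only [rm, Lm, Nm, Matrix.sub_apply, Matrix.smul_apply, Matrix.one_apply, of_apply,
      smul_eq_mul, Fin.ext_iff]
    split_ifs <;>
      first
        | ring1
        | (exfalso; omega)

lemma Gm_mul_rm (t : R) (w : ℕ) : Gm t w * rm t w = sm t w := by
  ext i j
  rw [rm, Matrix.mul_sub, Matrix.mul_one, Matrix.mul_smul, Matrix.sub_apply,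
    Matrix.smul_apply, smul_eq_mul]
  by_cases hj : (j : ℕ) + 1 = w
  · rw [mul_Nm_apply_last _ _ hj, mul_zero, sub_zero]
    simp only [Gm, sm, of_apply, Fin.ext_iff]
    by_cases hi : (i : ℕ) = 0
    · rw [if_pos hi, if_pos hi]
      by_cases hj0 : (j : ℕ) = 0
      · rw [if_pos hj0, if_pos hj0, show w = 1 by omega, pow_one]
      · rw [if_neg hj0, if_neg hj0, show w - (j : ℕ) = 1 by omega, pow_one]
    · have hiw := i.isLt
      rw [if_neg hi, if_neg hi]
      split_ifs <;> first | ring1 | (exfalso; omega)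
  · have hjw : (j : ℕ) + 1 < w := by omega
    rw [mul_Nm_apply_succ _ _ (k := ⟨(j : ℕ) + 1, hjw⟩) rfl]
    simp only [Gm, sm, of_apply, Fin.ext_iff, Fin.val_mk]
    by_cases hi : (i : ℕ) = 0
    · rw [if_pos hi, if_pos hi, if_pos hi]
      by_cases hj0 : (j : ℕ) = 0
      · rw [if_pos hj0, if_neg (show ¬((j : ℕ) + 1 = 0) by omega), if_pos hj0]
        have hp : t ^ w = t * t ^ (w - ((j : ℕ) + 1)) := by
          rw [← pow_succ']; congr 1; omega
        linear_combination hp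
      · rw [if_neg hj0, if_neg (show ¬((j : ℕ) + 1 = 0) by omega), if_neg hj0]
        have hp : t ^ (w - (j : ℕ)) = t * t ^ (w - ((j : ℕ) + 1)) := by
          rw [← pow_succ']; congr 1; omega
        linear_combination hp
    · rw [if_neg hi, if_neg hi, if_neg hi]
      have hiw := i.isLt
      split_ifs <;> first | ring1 | (exfalso; omega)

lemma Gm_lower_zero (t : R) {w : ℕ} {i j : Fin w} (h : (j : ℕ) < (i : ℕ)) :
    Gm t w i j = 0 := by
  simp only [Gm, of_apply, Fin.ext_iff]
  rw [if_neg (by omega), if_neg (by omega)]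

lemma identity_one (t : R) (w : ℕ) :
    t • ((1 - Nm R w) * qm t w) + (t - 1) • ((1 - Nm R w) * Um R w * qm t w) = Gm t w := by
  have h1 : (1 - Nm R w) * (t • (1 : Matrix (Fin w) (Fin w) R) + (t - 1) • Um R w) * qm t w
      = Gm t w := by
    rw [pm_mul_right_U, ← Gm_mul_rm t w, Matrix.mul_assoc, rm_mul_qm, Matrix.mul_one]
  have e : (1 - Nm R w) * (t • (1 : Matrix (Fin w) (Fin w) R) + (t - 1) • Um R w) * qm t w
      = t • ((1 - Nm R w) * qm t w) + (t - 1) • ((1 - Nm R w) * Um R w * qm t w) := by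
    simp only [Matrix.mul_add, Matrix.add_mul, Matrix.mul_sub, Matrix.sub_mul, Matrix.mul_smul,
      Matrix.smul_mul, Matrix.mul_one, Matrix.one_mul, Matrix.mul_assoc, smul_sub, smul_add]
  rw [← e, h1]

lemma identity_two (t : R) (w : ℕ) :
    (1 - Nm R w) * qm t w - (t - 1) • ((1 - Nm R w) * Lm R w * qm t w) = 1 := by
  have h1 : (1 - Nm R w) * ((1 : Matrix (Fin w) (Fin w) R) - (t - 1) • Lm R w) * qm t w
      = 1 := by
    rw [pm_mul_right_L, rm_mul_qm]
  have e : (1 - Nm R w) * ((1 : Matrix (Fin w) (Fin w) R) - (t - 1) • Lm R w) * qm t w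
      = (1 - Nm R w) * qm t w - (t - 1) • ((1 - Nm R w) * Lm R w * qm t w) := by
    simp only [Matrix.mul_add, Matrix.add_mul, Matrix.mul_sub, Matrix.sub_mul, Matrix.mul_smul,
      Matrix.smul_mul, Matrix.mul_one, Matrix.one_mul, Matrix.mul_assoc, smul_sub, smul_add]
  rw [← e, h1]

lemma det_pm (w : ℕ) : ((1 : Matrix (Fin w) (Fin w) R) - Nm R w).det = 1 := by
  rw [Matrix.det_of_lowerTriangular]
  · refine Finset.prod_eq_one fun i _ => ?_
    simp [Matrix.sub_apply, Matrix.one_apply, Nm, Nat.succ_ne_self]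
  · intro i j hij
    have h : i < j := hij
    simp only [Matrix.sub_apply, Matrix.one_apply, Nm, of_apply]
    rw [if_neg (by exact Fin.ne_of_lt h), if_neg (by rw [Fin.lt_def] at h; omega), sub_zero]

lemma det_qm (t : R) (w : ℕ) : (qm t w).det = 1 := by
  rw [Matrix.det_of_lowerTriangular]
  · refine Finset.prod_eq_one fun i _ => ?_
    simp [qm]
  · intro i j hij
    have h : i < j := hij
    simp only [qm, of_apply]
    rw [if_neg (by rw [Fin.lt_def] at h; omega)]

open Kronecker

section KROn

variable {ι : Type*} [Fintype ι] [DecidableEq ι]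

lemma cable_decomp (t : R) (w : ℕ) (Vm : Matrix ι ι R) :
    t • cableS w Vm - (cableS w Vm)ᵀ =
      (1 : Matrix (Fin w) (Fin w) R) ⊗ₖ (t • Vm - Vmᵀ) + Um R w ⊗ₖ ((t - 1) • Vm)
        + Lm R w ⊗ₖ ((t - 1) • Vmᵀ) := by
  ext ⟨i, a⟩ ⟨j, b⟩
  simp only [cableS, Matrix.sub_apply, Matrix.smul_apply, Matrix.add_apply,
    Matrix.transpose_apply, Matrix.kroneckerMap_apply, Matrix.one_apply, Um, Lm, of_apply,
    smul_eq_mul, Fin.ext_iff, Fin.le_def]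
  split_ifs <;> first | ring1 | (exfalso; omega)

theorem key_det (t : R) (w : ℕ) (hw : 1 ≤ w) (Vm : Matrix ι ι R)
    (hJ : (Vm - Vmᵀ).det = 1) :
    (t • cableS w Vm - (cableS w Vm)ᵀ).det = (t ^ w • Vm - Vmᵀ).det := by
  haveI : NeZero w := ⟨by omega⟩
  set P : Matrix (Fin w × ι) (Fin w × ι) R := (1 - Nm R w) ⊗ₖ (1 : Matrix ι ι R) with hP
  set Q : Matrix (Fin w × ι) (Fin w × ι) R := qm t w ⊗ₖ (1 : Matrix ι ι R) with hQ
  set T : Matrix (Fin w × ι) (Fin w × ι) R :=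
    Matrix.of (fun x y : Fin w × ι =>
      Gm t w x.1 y.1 * Vm x.2 y.2
        - (1 : Matrix (Fin w) (Fin w) R) x.1 y.1 * Vmᵀ x.2 y.2) with hT
  have hPAQ : P * (t • cableS w Vm - (cableS w Vm)ᵀ) * Q = T := by
    rw [cable_decomp]
    simp only [hP, hQ, Matrix.mul_add, Matrix.add_mul, ← Matrix.mul_kronecker_mul,
      Matrix.mul_one, Matrix.one_mul]
    ext ⟨i, a⟩ ⟨j, b⟩
    have h1 : (t • ((1 - Nm R w) * qm t w)
        + (t - 1) • ((1 - Nm R w) * Um R w * qm t w)) i j = Gm t w i j := by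
      rw [identity_one]
    have h2 : ((1 - Nm R w) * qm t w
        - (t - 1) • ((1 - Nm R w) * Lm R w * qm t w)) i j
        = (1 : Matrix (Fin w) (Fin w) R) i j := by
      rw [identity_two]
    simp only [Matrix.add_apply, Matrix.sub_apply, Matrix.smul_apply, smul_eq_mul,
      Matrix.kroneckerMap_apply, of_apply, Matrix.transpose_apply, hT] at h1 h2 ⊢
    linear_combination h1 * Vm a b - h2 * Vm b a
  have hTb : T.BlockTriangular Prod.fst := by
    intro x y h
    have h1 : (y.1 : ℕ) < (x.1 : ℕ) := h
    simp only [hT, of_apply, Matrix.one_apply]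
    rw [Gm_lower_zero t h1, if_neg (Fin.ne_of_gt h), zero_mul, zero_mul, sub_zero]
  have hblock : ∀ a : Fin w, (T.toSquareBlock Prod.fst a).det
      = (Gm t w a a • Vm - Vmᵀ).det := by
    intro a
    let e : ι ≃ {x : Fin w × ι // x.1 = a} :=
      ⟨fun b => ⟨(a, b), rfl⟩, fun x => x.1.2, fun b => rfl,
        fun x => Subtype.ext (Prod.ext x.2.symm rfl)⟩
    rw [← Matrix.det_submatrix_equiv_self e]
    congr 1
    ext b c
    simp [Matrix.toSquareBlock_def, hT, Matrix.one_apply, e]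
  have hdetT : T.det = (t ^ w • Vm - Vmᵀ).det :=
    calc T.det = ∏ a : Fin w, (T.toSquareBlock Prod.fst a).det := hTb.det_fintype
      _ = ∏ a : Fin w, (Gm t w a a • Vm - Vmᵀ).det :=
            Finset.prod_congr rfl fun a _ => hblock a
      _ = (Gm t w (0 : Fin w) (0 : Fin w) • Vm - Vmᵀ).det := by
            refine Fintype.prod_eq_single 0 fun a ha => ?_
            have hva : (a : ℕ) ≠ 0 := fun h => ha (by ext; simp [h])
            have hG : Gm t w a a = 1 := by simp [Gm, hva, ha]
            rw [hG, one_smul, hJ]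
      _ = (t ^ w • Vm - Vmᵀ).det := by
            rw [show Gm t w (0 : Fin w) (0 : Fin w) = t ^ w by simp [Gm]]
  have hdP : P.det = 1 := by
    rw [hP, Matrix.det_kronecker, det_pm, Matrix.det_one, one_pow, one_pow, mul_one]
  have hdQ : Q.det = 1 := by
    rw [hQ, Matrix.det_kronecker, det_qm, Matrix.det_one, one_pow, one_pow, mul_one]
  have hdets := congrArg Matrix.det hPAQ
  rw [Matrix.det_mul, Matrix.det_mul, hdP, hdQ, one_mul, mul_one, hdetT] at hdets
  exact hdets

end KROn
end CableAux

open CableAux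

/-- if a `2n×2n` integer matrix `V` is Alexander trivial,
i.e. `det(t·V − Vᵀ) = tⁿ`, then for every `w ≥ 1` the matrix `S_w(V)` is
Alexander trivial: `det(t·S_w(V) − S_w(V)ᵀ) = t^{nw}`. -/
theorem cableS_alexander_trivial (n w : ℕ) (hw : 1 ≤ w)
    (V : Matrix (Fin (2 * n)) (Fin (2 * n)) ℤ)
    (hV : alexPoly V = (X : ℤ[X]) ^ n) :
    alexPoly (cableS w V) = (X : ℤ[X]) ^ (n * w) := by
  unfold alexPoly at hV ⊢
  set Vm : Matrix _ _ ℤ[X] := V.map (fun a : ℤ => (a : ℤ[X])) with hVm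
  have hV' : ((X : ℤ[X]) • Vm - Vmᵀ).det = X ^ n := by
    rw [← Matrix.transpose_map]; exact hV
  have hcmap : (cableS w V).map (fun a : ℤ => (a : ℤ[X])) = cableS w Vm := by
    ext ⟨i, a⟩ ⟨j, b⟩
    simp [cableS, Matrix.map_apply, hVm, apply_ite (fun z : ℤ => (z : ℤ[X]))]
  rw [Matrix.transpose_map, hcmap]
  have hdetJ : (V - Vᵀ).det = 1 := by
    have h1 := congrArg (Polynomial.evalRingHom (1 : ℤ)) hV'
    rw [RingHom.map_det, RingHom.mapMatrix_apply] at h1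
    have h2 : ((X : ℤ[X]) • Vm - Vmᵀ).map (Polynomial.evalRingHom (1 : ℤ)) = V - Vᵀ := by
      ext a b
      simp [Matrix.map_apply, Matrix.sub_apply, Matrix.smul_apply, Matrix.transpose_apply,
        hVm, smul_eq_mul]
    rw [h2] at h1
    simpa using h1
  have hJ : (Vm - Vmᵀ).det = 1 := by
    have he : Vm - Vmᵀ = (V - Vᵀ).map (Int.castRingHom ℤ[X]) := by
      ext a b
      simp [hVm, Matrix.map_apply, Matrix.sub_apply, Matrix.transpose_apply]
    rw [he, ← RingHom.mapMatrix_apply, ← RingHom.map_det, hdetJ]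
    simp
  have hXw : (((X : ℤ[X]) ^ w) • Vm - Vmᵀ).det = X ^ (n * w) := by
    have hφ := congrArg (Polynomial.eval₂RingHom (Int.castRingHom ℤ[X]) ((X : ℤ[X]) ^ w)) hV'
    rw [RingHom.map_det, RingHom.mapMatrix_apply] at hφ
    have h2 : ((X : ℤ[X]) • Vm - Vmᵀ).map
        (Polynomial.eval₂RingHom (Int.castRingHom ℤ[X]) ((X : ℤ[X]) ^ w))
        = ((X : ℤ[X]) ^ w) • Vm - Vmᵀ := by
      ext a b
      have hent : ((X : ℤ[X]) • Vm - Vmᵀ) a b = X * (V a b : ℤ[X]) - (V b a : ℤ[X]) := by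
        simp [hVm, Matrix.sub_apply, Matrix.smul_apply, Matrix.transpose_apply,
          Matrix.map_apply, smul_eq_mul]
      rw [Matrix.map_apply, hent, _root_.map_sub, _root_.map_mul, map_intCast, map_intCast,
        Polynomial.coe_eval₂RingHom, Polynomial.eval₂_X]
      simp [hVm, Matrix.sub_apply, Matrix.smul_apply, Matrix.transpose_apply,
        Matrix.map_apply, smul_eq_mul]
    rw [h2] at hφ
    rw [hφ]
    rw [map_pow]
    simp only [Polynomial.coe_eval₂RingHom, Polynomial.eval₂_X]
    rw [← pow_mul, mul_comm w n]
  rw [key_det X w hw Vm hJ]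
  exact hXw
end

section
/- Let g, n ≥ 0 be integers, m = n + g, and let V be a 2m×2m integer matrix such that: (i) the top-left 2n×2n block A of V is Alexander trivial, i.e. det(t·A − Aᵀ) = tⁿ in ℤ[t]; and (ii) V − Vᵀ is the block diagonal matrix (A − Aᵀ) ⊕ J_{2g}. Then for every integer w ≥ 1, the 2wm×2wm matrix S_w(V) is congruent over ℤ to an integer matrix whose top-left 2(wm−g)×2(wm−g) block is Alexander trivial, i.e. has determinant polynomial det(t·X_Δ − X_Δᵀ) = t^{wm−g}. -/
open Matrix Polynomial

section CableDet

variable {K : Type*} [Field K] {σ : Type*} [Fintype σ] [DecidableEq σ]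

/-- The `w`-fold cable pattern matrix with parameter `u` in the 0-th block column. -/
private def CM (t u : K) (A : Matrix σ σ K) (w : ℕ) : Matrix (Fin w × σ) (Fin w × σ) K :=
  Matrix.of fun p q =>
    t * (if (p.1 : ℕ) ≤ (q.1 : ℕ) then A p.2 q.2 else A q.2 p.2)
      - (if (q.1 : ℕ) = 0 then u * A q.2 p.2
         else if (q.1 : ℕ) ≤ (p.1 : ℕ) then A q.2 p.2 else A p.2 q.2)

private def e3 (w : ℕ) (σ : Type*) : Fin (w+1) × σ ≃ σ ⊕ (Fin w × σ) where
  toFun p := Fin.cases (Sum.inl p.2) (fun i => Sum.inr (i, p.2)) p.1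
  invFun x := Sum.elim (fun a => ((0 : Fin (w+1)), a)) (fun q => (q.1.succ, q.2)) x
  left_inv p := by
    obtain ⟨i, a⟩ := p
    induction i using Fin.cases <;> simp
  right_inv x := by rcases x with a | ⟨i, a⟩ <;> simp

private lemma CM_reindex (t u : K) (A : Matrix σ σ K) (w : ℕ) :
    reindex (e3 w σ) (e3 w σ) (CM t u A (w+1)) =
      fromBlocks (Matrix.of fun a b => t * A a b - u * A b a)
        (Matrix.of fun a (q : Fin w × σ) => (t - 1) * A a q.2)
        (Matrix.of fun (p : Fin w × σ) b => (t - u) * A b p.2)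
        (CM t 1 A w) := by
  ext x y
  rcases x with a | ⟨i, a⟩ <;> rcases y with b | ⟨j, b⟩ <;>
    simp only [reindex_apply, submatrix_apply, e3, Equiv.coe_fn_symm_mk, Sum.elim_inl,
      Sum.elim_inr, CM, of_apply, fromBlocks_apply₁₁, fromBlocks_apply₁₂,
      fromBlocks_apply₂₁, fromBlocks_apply₂₂, Fin.val_succ, Fin.val_zero] <;>
    split_ifs <;> first | ring1 | omega | (simp_all only [Fin.val_succ] <;> first | ring1 | omega) | (simp <;> ring1)

end CableDet

section DetCM

variable {K : Type*} [Field K] {σ : Type*} [Fintype σ] [DecidableEq σ]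

private lemma det_CM (t : K) (ht : t ≠ 0) (A : Matrix σ σ K) (nn : ℕ)
    (hcard : Fintype.card σ = 2 * nn)
    (hdet : ∀ s : K, (s • A - Aᵀ).det = s ^ nn) :
    ∀ w : ℕ, ∀ u : K, u ≠ 0 → (CM t u A (w+1)).det = u ^ nn * t ^ (nn * (w+1)) := by
  have hdet1 : (A - Aᵀ).det = 1 := by
    have := hdet 1; rwa [one_smul, one_pow] at this
  intro w
  induction w with
  | zero =>
    intro u hu
    have hC : (Matrix.of fun (p : Fin 0 × σ) b => (t - u) * A b p.2) = 0 := by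
      ext x y; exact x.1.elim0
    haveI : IsEmpty (Fin 0 × σ) := ⟨fun x => x.1.elim0⟩
    have h1 : (CM t u A 1).det = (Matrix.of fun a b => t * A a b - u * A b a).det := by
      rw [← det_reindex_self (e3 0 σ) (CM t u A 1), CM_reindex, hC,
        det_fromBlocks_zero₂₁, show (CM t 1 A 0).det = 1 from Matrix.det_isEmpty, mul_one]
    have h2 : (Matrix.of fun a b => t * A a b - u * A b a) = u • ((t * u⁻¹) • A - Aᵀ) := by
      ext a b
      simp only [Matrix.of_apply, Matrix.smul_apply, Matrix.sub_apply, Matrix.transpose_apply,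
        smul_eq_mul]
      field_simp
    rw [h1, h2, det_smul, hcard, hdet]
    have : (t * u⁻¹) ^ nn = t ^ nn * (u ^ nn)⁻¹ := by rw [mul_pow, inv_pow]
    rw [this]
    have hun : u ^ nn ≠ 0 := pow_ne_zero _ hu
    field_simp
    ring
  | succ w ih =>
    intro u hu
    -- reindex and row-reduce
    set A₁ : Matrix σ σ K := Matrix.of fun a b => t * A a b - u * A b a with hA₁
    set B₁ : Matrix σ (Fin (w+1) × σ) K := Matrix.of fun a q => (t - 1) * A a q.2 with hB₁
    set C₁ : Matrix (Fin (w+1) × σ) σ K := Matrix.of fun p b => (t - u) * A b p.2 with hC₁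
    set D₁ := CM t 1 A (w+1) with hD₁
    set B₀ : Matrix σ (Fin (w+1) × σ) K :=
      Matrix.of fun a q => if q = ((0 : Fin (w+1)), a) then (-1 : K) else 0 with hB₀
    set B₂ : Matrix σ (Fin (w+1) × σ) K :=
      Matrix.of fun a q => if (q.1 : ℕ) = 0 then A q.2 a - A a q.2 else 0 with hB₂
    set B₃ : Matrix σ (Fin (w+1) × σ) K :=
      Matrix.of fun c q => if (q.1 : ℕ) = 0 ∧ q.2 = c then (-1 : K) else 0 with hB₃
    have hL : (fromBlocks (1 : Matrix σ σ K) B₀ 0 1).det = 1 := by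
      rw [det_fromBlocks_zero₂₁, det_one, det_one, mul_one]
    have hB₀C₁ : B₀ * C₁ = Matrix.of fun a b => -((t - u) * A b a) := by
      ext a b
      simp [hB₀, hC₁, Matrix.mul_apply, ite_mul, Finset.sum_ite_eq']
    have hB₀D₁ : B₀ * D₁ = Matrix.of fun a q => -(D₁ ((0 : Fin (w+1)), a) q) := by
      ext a q
      simp [hB₀, Matrix.mul_apply, ite_mul, Finset.sum_ite_eq']
    have h11 : (1 : Matrix σ σ K) * A₁ + B₀ * C₁ = t • (A - Aᵀ) := by
      rw [Matrix.one_mul, hB₀C₁]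
      ext a b
      simp only [hA₁, Matrix.add_apply, Matrix.of_apply, Matrix.smul_apply, Matrix.sub_apply,
        Matrix.transpose_apply, smul_eq_mul]
      ring
    have h12 : (1 : Matrix σ σ K) * B₁ + B₀ * D₁ = B₂ := by
      rw [Matrix.one_mul, hB₀D₁]
      ext a ⟨j, b⟩
      simp only [hB₁, hB₂, hD₁, CM, Matrix.add_apply, Matrix.of_apply, Fin.val_zero]
      have h0j : ((0 : Fin (w+2)) : ℕ) ≤ (j : ℕ) := Nat.zero_le _
      split_ifs <;> first | ring1 | omega | (simp_all <;> first | ring1 | omega) | (simp only [Fin.val_zero, Nat.zero_le, ite_true, if_true] <;> split_ifs <;> first | ring1 | omega | (simp_all <;> ring1))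
    have hLmul : fromBlocks (1 : Matrix σ σ K) B₀ 0 1 * fromBlocks A₁ B₁ C₁ D₁
        = fromBlocks (t • (A - Aᵀ)) B₂ C₁ D₁ := by
      rw [fromBlocks_multiply]
      rw [h11, h12]
      congr 1 <;> simp
    have hdetTF : (t • (A - Aᵀ)).det = t ^ (2 * nn) := by
      rw [det_smul, hcard, hdet1, mul_one]
    haveI : Invertible (t • (A - Aᵀ)) :=
      Matrix.invertibleOfIsUnitDet _ (by rw [hdetTF]; exact (isUnit_iff_ne_zero.mpr (pow_ne_zero _ ht)))
    have hinv : ⅟(t • (A - Aᵀ)) * (A - Aᵀ) = t⁻¹ • (1 : Matrix σ σ K) := by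
      have h := invOf_mul_self (t • (A - Aᵀ))
      rw [Matrix.mul_smul] at h
      calc ⅟(t • (A - Aᵀ)) * (A - Aᵀ)
          = (t⁻¹ * t) • (⅟(t • (A - Aᵀ)) * (A - Aᵀ)) := by
            rw [inv_mul_cancel₀ ht, one_smul]
        _ = t⁻¹ • (t • (⅟(t • (A - Aᵀ)) * (A - Aᵀ))) := by rw [smul_smul]
        _ = t⁻¹ • (1 : Matrix σ σ K) := by rw [h]
    have hB₂fac : B₂ = (A - Aᵀ) * B₃ := by
      ext a ⟨j, b⟩
      by_cases hj : j = 0 <;>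
        simp [hB₂, hB₃, Matrix.mul_apply, hj, mul_ite, Finset.sum_ite_eq]
    have hC₁B₃ : C₁ * B₃ = Matrix.of fun (p : Fin (w+1) × σ) q =>
        if (q.1 : ℕ) = 0 then -((t - u) * A q.2 p.2) else 0 := by
      ext ⟨i, a⟩ ⟨j, b⟩
      by_cases hj : j = 0 <;>
        simp [hC₁, hB₃, Matrix.mul_apply, hj, mul_ite, Finset.sum_ite_eq]
    have hjunk : C₁ * ⅟(t • (A - Aᵀ)) * B₂ = t⁻¹ • (C₁ * B₃) := by
      have haux : ⅟(t • (A - Aᵀ)) * ((A - Aᵀ) * B₃) = t⁻¹ • B₃ := by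
        rw [← Matrix.mul_assoc, hinv, Matrix.smul_mul, Matrix.one_mul]
      rw [Matrix.mul_assoc, hB₂fac, haux, Matrix.mul_smul]
    have hSchur : D₁ - C₁ * ⅟(t • (A - Aᵀ)) * B₂ = CM t (u * t⁻¹) A (w+1) := by
      rw [hjunk, hC₁B₃]
      ext ⟨i, a⟩ ⟨j, b⟩
      simp only [hD₁, CM, Matrix.sub_apply, Matrix.smul_apply, Matrix.of_apply, smul_eq_mul]
      split_ifs <;> first | ring1 | omega | (field_simp; ring1) | (exfalso; omega)
    have step : (CM t u A (w+1+1)).det = t^(2*nn) * (CM t (u*t⁻¹) A (w+1)).det := by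
      rw [← det_reindex_self (e3 (w+1) σ) (CM t u A (w+1+1)), CM_reindex,
        ← hA₁, ← hB₁, ← hC₁, ← hD₁]
      have hdm : (fromBlocks A₁ B₁ C₁ D₁).det
          = ((fromBlocks (1 : Matrix σ σ K) B₀ 0 1) * (fromBlocks A₁ B₁ C₁ D₁)).det := by
        rw [det_mul, hL, one_mul]
      rw [hdm, hLmul, det_fromBlocks₁₁, hdetTF, hSchur]
    rw [step, ih (u * t⁻¹) (mul_ne_zero hu (inv_ne_zero ht))]
    have hexp : (u * t⁻¹) ^ nn = u ^ nn * (t ^ nn)⁻¹ := by rw [mul_pow, inv_pow]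
    rw [hexp]
    have htn : t ^ nn ≠ 0 := pow_ne_zero _ ht
    field_simp
    ring

end DetCM


section Middle

variable {K : Type*} [Field K]

/-- shift-by-`g` matrix on `Fin k`. -/
private def NNK (K : Type*) [Field K] (g k : ℕ) : Matrix (Fin k) (Fin k) K :=
  Matrix.of fun z z' => if (z : ℕ) = (z' : ℕ) + g then 1 else 0

private lemma det_tone_sub_NNt (t : K) (g k : ℕ) (hgk : k = 0 ∨ 0 < g) :
    (t • (1 : Matrix (Fin k) (Fin k) K) - (NNK K g k)ᵀ).det = t ^ k := by
  rcases hgk with rfl | hg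
  · rw [Matrix.det_isEmpty, pow_zero]
  · rw [Matrix.det_of_upperTriangular]
    · have hdiag : ∀ i : Fin k,
          (t • (1 : Matrix (Fin k) (Fin k) K) - (NNK K g k)ᵀ) i i = t := by
        intro i
        simp only [Matrix.sub_apply, Matrix.smul_apply, Matrix.one_apply_eq, smul_eq_mul,
          mul_one, Matrix.transpose_apply, NNK, Matrix.of_apply,
          if_neg (by omega : ¬ (i : ℕ) = (i : ℕ) + g), sub_zero]
      rw [Finset.prod_congr rfl (fun i _ => hdiag i), Finset.prod_const, Finset.card_univ,
        Fintype.card_fin]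
    · intro i j hji
      simp only [id_eq] at hji
      have h1 : ¬ (i = j) := by intro h; subst h; exact lt_irrefl _ hji
      have h2 : ¬ ((j : ℕ) = (i : ℕ) + g) := by
        have := hji
        simp only [Fin.lt_def] at this
        omega
      simp [NNK, Matrix.one_apply, h1, h2]

private lemma det_one_sub_tNN (t : K) (g k : ℕ) (hgk : k = 0 ∨ 0 < g) :
    ((1 : Matrix (Fin k) (Fin k) K) - t • NNK K g k).det = 1 := by
  rcases hgk with rfl | hg
  · rw [Matrix.det_isEmpty]
  · rw [Matrix.det_of_lowerTriangular]
    · have hdiag : ∀ i : Fin k,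
          ((1 : Matrix (Fin k) (Fin k) K) - t • NNK K g k) i i = 1 := by
        intro i
        simp only [Matrix.sub_apply, Matrix.smul_apply, Matrix.one_apply_eq, smul_eq_mul,
          NNK, Matrix.of_apply, if_neg (by omega : ¬ (i : ℕ) = (i : ℕ) + g),
          mul_zero, sub_zero]
      rw [Finset.prod_congr rfl (fun i _ => hdiag i), Finset.prod_const, one_pow]
    · intro i j hji
      have hij : i < j := hji
      have h1 : ¬ (i = j) := by intro h; subst h; exact lt_irrefl _ hij
      have h2 : ¬ ((i : ℕ) = (j : ℕ) + g) := by
        have := hij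
        simp only [Fin.lt_def] at this
        omega
      simp [NNK, Matrix.one_apply, h1, h2]

/-- determinant of a block matrix with zero top-left corner and invertible top-right block. -/
private lemma det_corner_zero {m : Type*} [Fintype m] [DecidableEq m]
    (M₁ M₂ M₄ : Matrix m m K)
    (h₁ : IsUnit M₁.det) :
    (fromBlocks (0 : Matrix m m K) M₁ M₂ M₄).det = (-M₂).det * M₁.det := by
  have e1 : fromBlocks (0 : Matrix m m K) M₁ M₂ M₄
      = fromBlocks 1 0 (M₄ * M₁⁻¹) 1 * fromBlocks 0 M₁ M₂ 0 := by
    rw [fromBlocks_multiply]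
    congr 1 <;> simp [Matrix.nonsing_inv_mul_cancel_right _ _ h₁]
  have e2 : (fromBlocks (0 : Matrix m m K) M₁ M₂ 0)
      = fromBlocks 0 1 (-1) 0 * fromBlocks (-M₂) 0 0 M₁ := by
    rw [fromBlocks_multiply]
    congr 1 <;> simp
  have e3 : (fromBlocks (0 : Matrix m m K) 1 (-1) 0)
      = (fromBlocks 1 1 0 1 : Matrix (m ⊕ m) (m ⊕ m) K) *
        (fromBlocks 1 0 (-1) 1 : Matrix (m ⊕ m) (m ⊕ m) K) *
        (fromBlocks 1 1 0 1 : Matrix (m ⊕ m) (m ⊕ m) K) := by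
    rw [fromBlocks_multiply, fromBlocks_multiply]
    congr 1 <;> simp
  rw [e1, det_mul, e2, det_mul, e3, det_mul, det_mul]
  simp [det_fromBlocks_zero₁₂, det_fromBlocks_zero₂₁]

/-- explicit right inverse of `fromBlocks 0 M₁ M₂ M₄`. -/
private lemma corner_zero_mul_inv {m : Type*} [Fintype m] [DecidableEq m]
    (M₁ M₂ M₄ : Matrix m m K)
    (h₁ : IsUnit M₁.det) (h₂ : IsUnit M₂.det) :
    fromBlocks (0 : Matrix m m K) M₁ M₂ M₄ *
      fromBlocks (-(M₂⁻¹ * M₄ * M₁⁻¹)) M₂⁻¹ M₁⁻¹ 0 = 1 := by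
  rw [fromBlocks_multiply]
  have b11 : (0 : Matrix m m K) * (-(M₂⁻¹ * M₄ * M₁⁻¹)) + M₁ * M₁⁻¹ = 1 := by
    rw [Matrix.zero_mul, Matrix.mul_nonsing_inv _ h₁, zero_add]
  have b12 : (0 : Matrix m m K) * M₂⁻¹ + M₁ * 0 = 0 := by
    rw [Matrix.zero_mul, Matrix.mul_zero, zero_add]
  have b21 : M₂ * (-(M₂⁻¹ * M₄ * M₁⁻¹)) + M₄ * M₁⁻¹ = 0 := by
    rw [Matrix.mul_neg, ← Matrix.mul_assoc, ← Matrix.mul_assoc,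
      Matrix.mul_nonsing_inv _ h₂, Matrix.one_mul, neg_add_cancel]
  have b22 : M₂ * M₂⁻¹ + M₄ * 0 = 1 := by
    rw [Matrix.mul_nonsing_inv _ h₂, Matrix.mul_zero, add_zero]
  rw [b11, b12, b21, b22, ← Matrix.fromBlocks_one]

private lemma sandwich_zero {E β : Type*} [Fintype E] [Fintype β]
    (X : Matrix E (β ⊕ β) K) (W : Matrix (β ⊕ β) (β ⊕ β) K) (Y : Matrix (β ⊕ β) E K)
    (hX : ∀ x z, X x (Sum.inl z) = 0) (hW : ∀ z z', W (Sum.inr z) (Sum.inr z') = 0)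
    (hY : ∀ z y, Y (Sum.inl z) y = 0) : X * W * Y = 0 := by
  have hXW : ∀ x z', (X * W) x (Sum.inr z') = 0 := by
    intro x z'
    rw [Matrix.mul_apply, Fintype.sum_sum_type]
    simp [hX, hW]
  ext x y
  rw [Matrix.mul_apply, Fintype.sum_sum_type]
  simp [hXW, hY]

end Middle


section Gram

variable (n g w' : ℕ)

/-- index abbreviations (written out inline in the defs) -/
private def Qmat : Matrix
    (((Fin (w'+1) × Fin (2*n)) ⊕ ((Fin w' × Fin g) ⊕ (Fin w' × Fin g))) ⊕ (Fin g ⊕ Fin g))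
    (Fin (w'+1) × (Fin (2*n) ⊕ (Fin g ⊕ Fin g))) ℤ :=
  Matrix.of fun α γ =>
    match α with
    | Sum.inl (Sum.inl p) => if γ = (p.1, Sum.inl p.2) then 1 else 0
    | Sum.inl (Sum.inr (Sum.inl x)) =>
        (if γ = (x.1.castSucc, Sum.inr (Sum.inl x.2)) then 1 else 0)
          - (if γ = (x.1.succ, Sum.inr (Sum.inl x.2)) then 1 else 0)
    | Sum.inl (Sum.inr (Sum.inr x)) => if γ = (x.1.castSucc, Sum.inr (Sum.inr x.2)) then 1 else 0
    | Sum.inr (Sum.inl r) => if γ = (Fin.last w', Sum.inr (Sum.inl r)) then 1 else 0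
    | Sum.inr (Sum.inr s) => if γ = (Fin.last w', Sum.inr (Sum.inr s)) then 1 else 0

private def Rmat : Matrix
    (Fin (w'+1) × (Fin (2*n) ⊕ (Fin g ⊕ Fin g)))
    (((Fin (w'+1) × Fin (2*n)) ⊕ ((Fin w' × Fin g) ⊕ (Fin w' × Fin g))) ⊕ (Fin g ⊕ Fin g)) ℤ :=
  Matrix.of fun γ α =>
    match γ, α with
    | (j, Sum.inl a), Sum.inl (Sum.inl p) => if p = (j, a) then 1 else 0
    | (j, Sum.inr (Sum.inl r)), Sum.inl (Sum.inr (Sum.inl x)) =>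
        if x.2 = r ∧ (j : ℕ) ≤ (x.1 : ℕ) then 1 else 0
    | (_, Sum.inr (Sum.inl r)), Sum.inr (Sum.inl r') => if r' = r then 1 else 0
    | (j, Sum.inr (Sum.inr s)), Sum.inl (Sum.inr (Sum.inr x)) =>
        if (x.1 : ℕ) = (j : ℕ) ∧ x.2 = s then 1 else 0
    | (j, Sum.inr (Sum.inr s)), Sum.inr (Sum.inr s') => if (j : ℕ) = w' ∧ s' = s then 1 else 0
    | _, _ => 0

private lemma QR_eq_one : Qmat n g w' * Rmat n g w' = 1 := by
  ext α β
  rw [Matrix.mul_apply]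
  rcases α with ((p | (x | x)) | (r | s)) <;>
    simp only [Qmat, Matrix.of_apply, ite_mul, one_mul, zero_mul, sub_mul,
      Finset.sum_sub_distrib, Finset.sum_ite_eq', Finset.mem_univ, if_true] <;>
    rcases β with ((q | (y | y)) | (r' | s')) <;>
    simp only [Rmat, Matrix.of_apply, Matrix.one_apply, Sum.inl.injEq, Sum.inr.injEq,
      Prod.mk.injEq, Fin.coe_castSucc, Fin.val_succ, Fin.val_last] <;>
    split_ifs <;>
    first
      | ring1
      | (exfalso; simp_all [Prod.ext_iff, Fin.ext_iff, Fin.val_last, Fin.coe_castSucc,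
          Fin.val_succ] <;> omega)
      | (simp_all [Prod.ext_iff, Fin.ext_iff, Fin.val_last, Fin.coe_castSucc,
          Fin.val_succ] <;> omega)

end Gram


section GramStruct

private def Qtop (n g w' : ℕ) : Matrix
    ((Fin (w'+1) × Fin (2*n)) ⊕ ((Fin w' × Fin g) ⊕ (Fin w' × Fin g)))
    (Fin (w'+1) × (Fin (2*n) ⊕ (Fin g ⊕ Fin g))) ℤ :=
  Matrix.of fun α γ =>
    match α with
    | Sum.inl p => if γ = (p.1, Sum.inl p.2) then 1 else 0
    | Sum.inr (Sum.inl x) =>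
        (if γ = (x.1.castSucc, Sum.inr (Sum.inl x.2)) then 1 else 0)
          - (if γ = (x.1.succ, Sum.inr (Sum.inl x.2)) then 1 else 0)
    | Sum.inr (Sum.inr x) => if γ = (x.1.castSucc, Sum.inr (Sum.inr x.2)) then 1 else 0

/-- the shift matrix on `Fin w' × Fin g`. -/
private def NNPZ (w' g : ℕ) : Matrix (Fin w' × Fin g) (Fin w' × Fin g) ℤ :=
  Matrix.of fun x y => if (x.1 : ℕ) = (y.1 : ℕ) + 1 ∧ x.2 = y.2 then 1 else 0

private lemma gram_eq (n g w' : ℕ) (V : Matrix (Fin (2*n) ⊕ (Fin g ⊕ Fin g)) (Fin (2*n) ⊕ (Fin g ⊕ Fin g)) ℤ)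
    (hpp : ∀ r r', V (Sum.inr (Sum.inl r)) (Sum.inr (Sum.inl r'))
      = V (Sum.inr (Sum.inl r')) (Sum.inr (Sum.inl r)))
    (hqq : ∀ s s', V (Sum.inr (Sum.inr s)) (Sum.inr (Sum.inr s'))
      = V (Sum.inr (Sum.inr s')) (Sum.inr (Sum.inr s)))
    (hpq : ∀ r s, V (Sum.inr (Sum.inl r)) (Sum.inr (Sum.inr s))
      = V (Sum.inr (Sum.inr s)) (Sum.inr (Sum.inl r)) + (if r = s then 1 else 0))
    (hcross : ∀ a c, V (Sum.inl a) (Sum.inr c) = V (Sum.inr c) (Sum.inl a)) :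
    Qtop n g w' * cableS (w'+1) V * (Qtop n g w')ᵀ =
      fromBlocks
        (Matrix.of fun p q => if (p.1 : ℕ) ≤ (q.1 : ℕ)
          then V (Sum.inl p.2) (Sum.inl q.2) else V (Sum.inl q.2) (Sum.inl p.2))
        (Matrix.of fun p y => Sum.elim (fun _ => (0:ℤ))
          (fun x : Fin w' × Fin g => V (Sum.inl p.2) (Sum.inr (Sum.inr x.2))) y)
        (Matrix.of fun y p => Sum.elim (fun _ => (0:ℤ))
          (fun x : Fin w' × Fin g => V (Sum.inl p.2) (Sum.inr (Sum.inr x.2))) y)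
        (fromBlocks 0 1 (NNPZ w' g)
          (Matrix.of fun x y => V (Sum.inr (Sum.inr x.2)) (Sum.inr (Sum.inr y.2)))) := by
  ext α β
  rw [Matrix.mul_apply]
  have hQS : ∀ α δ, (Qtop n g w' * cableS (w'+1) V) α δ =
      match α with
      | Sum.inl p => cableS (w'+1) V (p.1, Sum.inl p.2) δ
      | Sum.inr (Sum.inl x) => cableS (w'+1) V (x.1.castSucc, Sum.inr (Sum.inl x.2)) δ
          - cableS (w'+1) V (x.1.succ, Sum.inr (Sum.inl x.2)) δ
      | Sum.inr (Sum.inr x) => cableS (w'+1) V (x.1.castSucc, Sum.inr (Sum.inr x.2)) δ := by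
    intro α δ
    rcases α with (p | (x | x)) <;>
      simp [Qtop, Matrix.mul_apply, ite_mul, sub_mul, Finset.sum_sub_distrib,
        Finset.sum_ite_eq']
  simp only [hQS, Matrix.transpose_apply]
  clear hQS
  have hS : ∀ (i j : Fin (w'+1)) (x y : Fin (2*n) ⊕ (Fin g ⊕ Fin g)),
      cableS (w'+1) V (i, x) (j, y) = if (i : ℕ) ≤ (j : ℕ) then V x y else V y x := by
    intro i j x y
    by_cases h : (i : ℕ) ≤ (j : ℕ)
    · rw [cableS, Matrix.of_apply, if_pos (by exact h), if_pos h]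
    · rw [cableS, Matrix.of_apply, if_neg (by exact h), if_neg h]
  rcases α with (p | (⟨xi, xr⟩ | ⟨xi, xr⟩)) <;> rcases β with (q | (⟨yi, yr⟩ | ⟨yi, yr⟩)) <;>
    simp only [Qtop, Matrix.of_apply, mul_ite, mul_one, mul_zero, mul_sub, sub_mul, ite_mul,
      one_mul, zero_mul, Finset.sum_sub_distrib, Finset.sum_ite_eq', Finset.mem_univ, if_true,
      hS, fromBlocks_apply₁₁, fromBlocks_apply₁₂, fromBlocks_apply₂₁, fromBlocks_apply₂₂,
      Sum.elim_inl, Sum.elim_inr, Fin.coe_castSucc, Fin.val_succ, NNPZ,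
      Matrix.one_apply, Matrix.neg_apply, Matrix.zero_apply, Prod.mk.injEq, Fin.ext_iff]
  -- 8 scalar goals : EU, EVv, UE, UU, UVv, VvE, VvU, VvVv
  · have h := hcross p.2 (Sum.inl yr)
    split_ifs <;> omega
  · have h := hcross p.2 (Sum.inr yr)
    split_ifs <;> omega
  · have h := hcross q.2 (Sum.inl xr)
    split_ifs <;> omega
  · have h1 := hpp xr yr
    split_ifs <;> omega
  · have h := hpq xr yr
    simp only [Fin.ext_iff] at h
    split_ifs at h ⊢ <;> omega
  · have h := hcross q.2 (Sum.inr xr)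
    split_ifs <;> omega
  · have h := hpq yr xr
    simp only [Fin.ext_iff] at h
    split_ifs at h ⊢ <;> omega
  · have h := hqq xr yr
    split_ifs <;> omega

end GramStruct


section Lex

/-- lexicographic equivalence `Fin w' × Fin g ≃ Fin (w' * g)`. -/
private def eLex (w' g : ℕ) : Fin w' × Fin g ≃ Fin (w' * g) where
  toFun x := ⟨(x.2 : ℕ) + g * (x.1 : ℕ), by
    obtain ⟨i, r⟩ := x
    show (r : ℕ) + g * (i : ℕ) < w' * g
    have h1 : (r : ℕ) + g * (i : ℕ) < g * (i : ℕ) + g := by have := r.2; omega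
    have h2 : g * (i : ℕ) + g ≤ g * w' := by
      have hi : (i : ℕ) + 1 ≤ w' := i.2
      calc g * (i : ℕ) + g = g * ((i : ℕ) + 1) := by ring
        _ ≤ g * w' := Nat.mul_le_mul_left _ hi
    have h3 : g * w' = w' * g := Nat.mul_comm _ _
    omega⟩
  invFun z :=
    (⟨(z : ℕ) / g, Nat.div_lt_of_lt_mul
        (lt_of_lt_of_le z.2 (le_of_eq (Nat.mul_comm w' g)))⟩,
     ⟨(z : ℕ) % g, Nat.mod_lt _ (by
        rcases Nat.eq_zero_or_pos g with h | h
        · subst h; exact absurd z.2 (by simp)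
        · exact h)⟩)
  left_inv x := by
    rcases x with ⟨i, r⟩
    have hg : 0 < g := r.pos
    have h1 : ((r : ℕ) + g * (i : ℕ)) / g = (i : ℕ) := by
      rw [Nat.add_mul_div_left _ _ hg, Nat.div_eq_of_lt r.2, Nat.zero_add]
    have h2 : ((r : ℕ) + g * (i : ℕ)) % g = (r : ℕ) := by
      rw [Nat.add_mul_mod_self_left, Nat.mod_eq_of_lt r.2]
    ext
    · simp [h1]
    · simp [h2]
  right_inv z := by
    ext
    simp [Nat.mod_add_div]

private lemma lexcond (g : ℕ) (hg : 0 < g) (z z' : ℕ) :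
    ((z' : ℕ) / g = (z : ℕ) / g + 1 ∧ (z' : ℕ) % g = (z : ℕ) % g) ↔ z' = z + g := by
  constructor
  · rintro ⟨h1, h2⟩
    have e1 := Nat.mod_add_div z' g
    have e2 := Nat.mod_add_div z g
    rw [h1, h2, Nat.mul_add, Nat.mul_one] at e1
    generalize hP : g * (z / g) = P at e1 e2
    omega
  · rintro rfl
    exact ⟨by rw [Nat.add_div_right _ hg], by rw [Nat.add_mod_right]⟩

end Lex

-- new content
private def NNPK (K : Type*) [Field K] (w' g : ℕ) :
    Matrix (Fin w' × Fin g) (Fin w' × Fin g) K :=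
  Matrix.of fun x y => if (x.1 : ℕ) = (y.1 : ℕ) + 1 ∧ x.2 = y.2 then 1 else 0

private lemma hgk_aux (w' g : ℕ) : w' * g = 0 ∨ 0 < g := by
  rcases Nat.eq_zero_or_pos g with h | h
  · left; rw [h, Nat.mul_zero]
  · right; exact h

private lemma det_M1P {K : Type*} [Field K] (t : K) (w' g : ℕ) :
    (t • (1 : Matrix (Fin w' × Fin g) (Fin w' × Fin g) K) - (NNPK K w' g)ᵀ).det
      = t ^ (w' * g) := by
  rw [← det_reindex_self (eLex w' g) (t • (1 : Matrix (Fin w' × Fin g) (Fin w' × Fin g) K)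
    - (NNPK K w' g)ᵀ)]
  have h : reindex (eLex w' g) (eLex w' g)
      (t • (1 : Matrix (Fin w' × Fin g) (Fin w' × Fin g) K) - (NNPK K w' g)ᵀ)
      = t • (1 : Matrix (Fin (w'*g)) (Fin (w'*g)) K) - (NNK K g (w'*g))ᵀ := by
    ext z z'
    have hg : 0 < g := by
      rcases Nat.eq_zero_or_pos g with h | h
      · subst h; exact absurd z.2 (by simp)
      · exact h
    have hcond : ((((eLex w' g).symm z').1 : ℕ) = (((eLex w' g).symm z).1 : ℕ) + 1
        ∧ ((eLex w' g).symm z').2 = ((eLex w' g).symm z).2) ↔ (z' : ℕ) = (z : ℕ) + g := by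
      simp only [Fin.ext_iff]
      exact lexcond g hg _ _
    simp only [reindex_apply, submatrix_apply, Matrix.sub_apply, Matrix.smul_apply,
      Matrix.one_apply, Matrix.transpose_apply, NNPK, NNK, Matrix.of_apply, smul_eq_mul,
      EmbeddingLike.apply_eq_iff_eq, hcond]
  rw [h]
  exact det_tone_sub_NNt t g (w'*g) (hgk_aux w' g)

private lemma det_M2P {K : Type*} [Field K] (t : K) (w' g : ℕ) :
    ((1 : Matrix (Fin w' × Fin g) (Fin w' × Fin g) K) - t • NNPK K w' g).det = 1 := by
  rw [← det_reindex_self (eLex w' g) ((1 : Matrix (Fin w' × Fin g) (Fin w' × Fin g) K)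
    - t • NNPK K w' g)]
  have h : reindex (eLex w' g) (eLex w' g)
      ((1 : Matrix (Fin w' × Fin g) (Fin w' × Fin g) K) - t • NNPK K w' g)
      = (1 : Matrix (Fin (w'*g)) (Fin (w'*g)) K) - t • NNK K g (w'*g) := by
    ext z z'
    have hg : 0 < g := by
      rcases Nat.eq_zero_or_pos g with h | h
      · subst h; exact absurd z.2 (by simp)
      · exact h
    have hcond : ((((eLex w' g).symm z).1 : ℕ) = (((eLex w' g).symm z').1 : ℕ) + 1
        ∧ ((eLex w' g).symm z).2 = ((eLex w' g).symm z').2) ↔ (z : ℕ) = (z' : ℕ) + g := by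
      simp only [Fin.ext_iff]
      exact lexcond g hg _ _
    simp only [reindex_apply, submatrix_apply, Matrix.sub_apply, Matrix.smul_apply,
      Matrix.one_apply, NNPK, NNK, Matrix.of_apply, smul_eq_mul,
      EmbeddingLike.apply_eq_iff_eq, hcond]
  rw [h]
  exact det_one_sub_tNN t g (w'*g) (hgk_aux w' g)



section Final

private abbrev KK : Type := FractionRing (Polynomial ℤ)

private noncomputable def tK : KK := algebraMap (Polynomial ℤ) KK X

private lemma tK_ne_zero : tK ≠ 0 := by
  intro h
  have h0 : (X : ℤ[X]) = 0 :=
    IsFractionRing.injective (Polynomial ℤ) KK (by rw [map_zero]; exact h)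
  exact Polynomial.X_ne_zero h0

private lemma map_alexPoly {m : Type*} [Fintype m] [DecidableEq m] (M : Matrix m m ℤ) :
    algebraMap (Polynomial ℤ) KK (alexPoly M)
      = (tK • M.map (fun a : ℤ => (a : KK)) - (M.map (fun a : ℤ => (a : KK)))ᵀ).det := by
  rw [alexPoly, RingHom.map_det]
  congr 1
  ext i j
  simp only [RingHom.mapMatrix_apply, Matrix.map_apply, Matrix.sub_apply, Matrix.smul_apply,
    Matrix.transpose_apply, smul_eq_mul, map_sub, _root_.map_mul, map_intCast, tK]

private lemma alexPoly_reindex {m m' : Type*} [Fintype m] [DecidableEq m] [Fintype m']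
    [DecidableEq m'] (e : m ≃ m') (B : Matrix m m ℤ) :
    alexPoly (Matrix.reindex e e B) = alexPoly B := by
  rw [alexPoly, alexPoly, ← det_reindex_self e
    ((X : ℤ[X]) • B.map (fun a : ℤ => (a : ℤ[X])) - Bᵀ.map (fun a : ℤ => (a : ℤ[X])))]
  refine congrArg Matrix.det ?_
  ext i j
  simp [Matrix.map_apply]

private lemma alex_XT (n g w' : ℕ)
    (V : Matrix (Fin (2*n) ⊕ (Fin g ⊕ Fin g)) (Fin (2*n) ⊕ (Fin g ⊕ Fin g)) ℤ)
    (hA : alexPoly (Matrix.toBlocks₁₁ V) = (X : ℤ[X]) ^ n)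
    (hpp : ∀ r r', V (Sum.inr (Sum.inl r)) (Sum.inr (Sum.inl r'))
      = V (Sum.inr (Sum.inl r')) (Sum.inr (Sum.inl r)))
    (hqq : ∀ s s', V (Sum.inr (Sum.inr s)) (Sum.inr (Sum.inr s'))
      = V (Sum.inr (Sum.inr s')) (Sum.inr (Sum.inr s)))
    (hpq : ∀ r s, V (Sum.inr (Sum.inl r)) (Sum.inr (Sum.inr s))
      = V (Sum.inr (Sum.inr s)) (Sum.inr (Sum.inl r)) + (if r = s then 1 else 0))
    (hcross : ∀ a c, V (Sum.inl a) (Sum.inr c) = V (Sum.inr c) (Sum.inl a)) :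
    alexPoly (Qtop n g w' * cableS (w'+1) V * (Qtop n g w')ᵀ)
      = (X : ℤ[X]) ^ (n * (w'+1) + w' * g) := by
  apply IsFractionRing.injective (Polynomial ℤ) KK
  rw [map_alexPoly, map_pow]
  set ic : ℤ → KK := fun a => (a : KK) with hic
  -- the Alexander-polynomial hypothesis over KK
  have hdetK : ∀ s : KK, (s • ((Matrix.toBlocks₁₁ V).map ic)
      - ((Matrix.toBlocks₁₁ V).map ic)ᵀ).det = s ^ n := by
    intro s
    have h := congrArg (Polynomial.aeval s : ℤ[X] →ₐ[ℤ] KK) hA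
    rw [alexPoly, AlgHom.map_det, map_pow, Polynomial.aeval_X] at h
    rw [← h]
    congr 1
    ext i j
    simp only [AlgHom.mapMatrix_apply, Matrix.map_apply, Matrix.sub_apply, Matrix.smul_apply,
      Matrix.transpose_apply, smul_eq_mul, map_sub, _root_.map_mul, map_intCast,
      Polynomial.aeval_X, hic]
  set AK := (Matrix.toBlocks₁₁ V).map ic with hAK
  set M₁ : Matrix (Fin w' × Fin g) (Fin w' × Fin g) KK := tK • 1 - (NNPK KK w' g)ᵀ with hM₁
  set M₂ : Matrix (Fin w' × Fin g) (Fin w' × Fin g) KK := tK • NNPK KK w' g - 1 with hM₂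
  set DQK : Matrix (Fin w' × Fin g) (Fin w' × Fin g) KK :=
    Matrix.of fun x y => ic (V (Sum.inr (Sum.inr x.2)) (Sum.inr (Sum.inr y.2))) with hDQK
  set M₄ : Matrix (Fin w' × Fin g) (Fin w' × Fin g) KK := tK • DQK - DQKᵀ with hM₄
  set ZB : Matrix (Fin (w'+1) × Fin (2*n)) ((Fin w' × Fin g) ⊕ (Fin w' × Fin g)) KK :=
    Matrix.of fun p y => Sum.elim (fun _ => (0:KK))
      (fun x : Fin w' × Fin g => (tK - 1) * ic (V (Sum.inl p.2) (Sum.inr (Sum.inr x.2)))) y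
      with hZB
  set ZC : Matrix ((Fin w' × Fin g) ⊕ (Fin w' × Fin g)) (Fin (w'+1) × Fin (2*n)) KK :=
    Matrix.of fun y p => Sum.elim (fun _ => (0:KK))
      (fun x : Fin w' × Fin g => (tK - 1) * ic (V (Sum.inl p.2) (Sum.inr (Sum.inr x.2)))) y
      with hZC
  have hZ : tK • (Qtop n g w' * cableS (w'+1) V * (Qtop n g w')ᵀ).map ic
      - ((Qtop n g w' * cableS (w'+1) V * (Qtop n g w')ᵀ).map ic)ᵀ
      = fromBlocks (CM tK 1 AK (w'+1)) ZB ZC (fromBlocks 0 M₁ M₂ M₄) := by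
    rw [gram_eq n g w' V hpp hqq hpq hcross]
    ext α β
    rcases α with (p | (x | x)) <;> rcases β with (q | (y | y)) <;>
      simp only [hM₁, hM₂, hM₄, hZB, hZC, hDQK, hAK, hic, Matrix.map_apply, Matrix.smul_apply,
        Matrix.sub_apply, Matrix.transpose_apply, fromBlocks_apply₁₁, fromBlocks_apply₁₂,
        fromBlocks_apply₂₁, fromBlocks_apply₂₂, Matrix.of_apply, Sum.elim_inl, Sum.elim_inr,
        smul_eq_mul, CM, NNPZ, NNPK, Matrix.one_apply, Prod.ext_iff, Fin.ext_iff,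
        Matrix.toBlocks₁₁,
        Matrix.zero_apply, Int.cast_zero, Int.cast_one, mul_zero, sub_zero, zero_sub,
        apply_ite ic, Int.cast_ite] <;>
      first
        | ring1
        | omega
        | (push_cast; ring1)
        | (split_ifs <;>
            first
              | ring1
              | omega
              | (exfalso; omega)
              | (push_cast; ring1))
  rw [hZ]
  -- determinants
  have hdetM₁ : M₁.det = tK ^ (w' * g) := det_M1P tK w' g
  have hM₁unit : IsUnit M₁.det := by
    rw [hdetM₁]; exact isUnit_iff_ne_zero.mpr (pow_ne_zero _ tK_ne_zero)
  have hnegM₂ : -M₂ = 1 - tK • NNPK KK w' g := by rw [hM₂, neg_sub]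
  have hdetnegM₂ : (-M₂).det = 1 := by rw [hnegM₂]; exact det_M2P tK w' g
  have hM₂unit : IsUnit M₂.det := by
    have h : M₂.det = (-1 : KK) ^ Fintype.card (Fin w' × Fin g) * (-M₂).det := by
      rw [← det_neg, neg_neg]
    rw [h, hdetnegM₂, mul_one]
    exact (isUnit_one.neg).pow _
  have hZD : (fromBlocks (0 : Matrix (Fin w' × Fin g) (Fin w' × Fin g) KK) M₁ M₂ M₄).det
      = tK ^ (w' * g) := by
    rw [det_corner_zero M₁ M₂ M₄ hM₁unit, hdetnegM₂, one_mul, hdetM₁]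
  haveI : Invertible (fromBlocks (0 : Matrix (Fin w' × Fin g) (Fin w' × Fin g) KK) M₁ M₂ M₄) :=
    Matrix.invertibleOfIsUnitDet _
      (by rw [hZD]; exact isUnit_iff_ne_zero.mpr (pow_ne_zero _ tK_ne_zero))
  have hW : ⅟(fromBlocks (0 : Matrix (Fin w' × Fin g) (Fin w' × Fin g) KK) M₁ M₂ M₄)
      = fromBlocks (-(M₂⁻¹ * M₄ * M₁⁻¹)) M₂⁻¹ M₁⁻¹ 0 := by
    rw [invOf_eq_nonsing_inv]
    exact Matrix.inv_eq_right_inv (corner_zero_mul_inv M₁ M₂ M₄ hM₁unit hM₂unit)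
  have hsand : ZB * ⅟(fromBlocks (0 : Matrix (Fin w' × Fin g) (Fin w' × Fin g) KK) M₁ M₂ M₄)
      * ZC = 0 := by
    rw [hW]
    exact sandwich_zero _ _ _ (fun x z => rfl)
      (fun z z' => by simp [fromBlocks_apply₂₂]) (fun z y => rfl)
  rw [det_fromBlocks₂₂, hsand, sub_zero, hZD,
    det_CM tK tK_ne_zero AK n (Fintype.card_fin _) hdetK w' 1 one_ne_zero, one_pow, one_mul,
    ← pow_add]
  rw [show algebraMap (Polynomial ℤ) KK X = tK from rfl]
  rw [Nat.add_comm (w' * g) (n * (w' + 1))]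

end Final


/-- let `m = n + g` and let `V` be a `2m×2m` integer matrix (indexed by
`Fin (2n) ⊕ (Fin g ⊕ Fin g)`) whose top-left `2n×2n` block `A` is Alexander trivial and
such that `V − Vᵀ = (A − Aᵀ) ⊕ J_{2g}` with `J_{2g} = [[0, I_g], [−I_g, 0]]`. Then for
every `w ≥ 1` the matrix `S_w(V)` is congruent over `ℤ` to a matrix whose top-left
`2(wm−g)×2(wm−g)` block is Alexander trivial. -/
theorem cableS_algebraic_genus (n g w : ℕ) (hw : 1 ≤ w)
    (V : Matrix (Fin (2 * n) ⊕ (Fin g ⊕ Fin g)) (Fin (2 * n) ⊕ (Fin g ⊕ Fin g)) ℤ)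
    (hA : alexPoly (Matrix.toBlocks₁₁ V) = (X : ℤ[X]) ^ n)
    (hV : V - Vᵀ = Matrix.fromBlocks
      (Matrix.toBlocks₁₁ V - (Matrix.toBlocks₁₁ V)ᵀ) 0 0
      (Matrix.fromBlocks 0 1 (-1) 0)) :
    ∃ (P : Matrix (Fin w × (Fin (2 * n) ⊕ (Fin g ⊕ Fin g)))
        (Fin w × (Fin (2 * n) ⊕ (Fin g ⊕ Fin g))) ℤ)
      (e : (Fin w × (Fin (2 * n) ⊕ (Fin g ⊕ Fin g)))
        ≃ (Fin (2 * (w * (n + g) - g)) ⊕ Fin (2 * g))),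
      IsUnit P.det ∧
      alexPoly ((Matrix.reindex e e (P * cableS w V * Pᵀ)).toBlocks₁₁)
        = (X : ℤ[X]) ^ (w * (n + g) - g) := by
  obtain ⟨w', rfl⟩ : ∃ w', w = w' + 1 := ⟨w - 1, by omega⟩
  -- pointwise consequences of hV
  have hVe : ∀ x y, V x y - V y x = (Matrix.fromBlocks
      (Matrix.toBlocks₁₁ V - (Matrix.toBlocks₁₁ V)ᵀ) 0 0
      (Matrix.fromBlocks 0 1 (-1) 0)) x y := by
    intro x y
    have h := congrFun (congrFun hV x) y
    simpa [Matrix.sub_apply, Matrix.transpose_apply] using h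
  have hpp : ∀ r r', V (Sum.inr (Sum.inl r)) (Sum.inr (Sum.inl r'))
      = V (Sum.inr (Sum.inl r')) (Sum.inr (Sum.inl r)) := by
    intro r r'
    have h := hVe (Sum.inr (Sum.inl r)) (Sum.inr (Sum.inl r'))
    simp only [fromBlocks_apply₂₂, fromBlocks_apply₁₁, Matrix.zero_apply] at h
    omega
  have hqq : ∀ s s', V (Sum.inr (Sum.inr s)) (Sum.inr (Sum.inr s'))
      = V (Sum.inr (Sum.inr s')) (Sum.inr (Sum.inr s)) := by
    intro s s'
    have h := hVe (Sum.inr (Sum.inr s)) (Sum.inr (Sum.inr s'))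
    simp only [fromBlocks_apply₂₂, Matrix.zero_apply] at h
    omega
  have hpq : ∀ r s, V (Sum.inr (Sum.inl r)) (Sum.inr (Sum.inr s))
      = V (Sum.inr (Sum.inr s)) (Sum.inr (Sum.inl r)) + (if r = s then 1 else 0) := by
    intro r s
    have h := hVe (Sum.inr (Sum.inl r)) (Sum.inr (Sum.inr s))
    simp only [fromBlocks_apply₂₂, fromBlocks_apply₁₂, Matrix.one_apply] at h
    split_ifs at h ⊢ <;> omega
  have hcross : ∀ a c, V (Sum.inl a) (Sum.inr c) = V (Sum.inr c) (Sum.inl a) := by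
    intro a c
    have h := hVe (Sum.inl a) (Sum.inr c)
    simp only [fromBlocks_apply₁₂, Matrix.zero_apply] at h
    omega
  -- exponent bookkeeping
  have hkey : (w' + 1) * (n + g) - g = n * (w' + 1) + w' * g := by
    have h1 : (w' + 1) * (n + g) = n * (w' + 1) + w' * g + g := by ring
    rw [h1]
    exact Nat.add_sub_cancel _ _
  -- equivalences
  have hcards : Fintype.card (Fin (w'+1) × (Fin (2*n) ⊕ (Fin g ⊕ Fin g)))
      = Fintype.card (((Fin (w'+1) × Fin (2*n)) ⊕ ((Fin w' × Fin g) ⊕ (Fin w' × Fin g)))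
        ⊕ (Fin g ⊕ Fin g)) := by
    simp only [Fintype.card_prod, Fintype.card_sum, Fintype.card_fin]
    ring
  let eκ : (Fin (w'+1) × (Fin (2*n) ⊕ (Fin g ⊕ Fin g)))
      ≃ (((Fin (w'+1) × Fin (2*n)) ⊕ ((Fin w' × Fin g) ⊕ (Fin w' × Fin g))) ⊕ (Fin g ⊕ Fin g)) :=
    Fintype.equivOfCardEq hcards
  have hTcard : Fintype.card ((Fin (w'+1) × Fin (2*n)) ⊕ ((Fin w' × Fin g) ⊕ (Fin w' × Fin g)))
      = 2 * ((w'+1) * (n + g) - g) := by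
    rw [hkey]
    simp only [Fintype.card_prod, Fintype.card_sum, Fintype.card_fin]
    ring
  let eT := Fintype.equivFinOfCardEq hTcard
  have hBcard : Fintype.card (Fin g ⊕ Fin g) = 2 * g := by
    simp only [Fintype.card_sum, Fintype.card_fin]
    ring
  let eB := Fintype.equivFinOfCardEq hBcard
  refine ⟨(Qmat n g w').submatrix eκ id, eκ.trans (Equiv.sumCongr eT eB), ?_, ?_⟩
  · -- P is unimodular
    have hmul : (Qmat n g w').submatrix eκ id * (Rmat n g w').submatrix id eκ = 1 := by
      have h := Matrix.submatrix_mul_equiv (Qmat n g w') (Rmat n g w') (⇑eκ) (Equiv.refl _) (⇑eκ)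
      rw [Equiv.coe_refl] at h
      rw [h, QR_eq_one, Matrix.submatrix_one_equiv]
    exact IsUnit.of_mul_eq_one _ (by rw [← det_mul, hmul, det_one])
  · -- the Alexander polynomial of the top-left block
    have hPS : (Qmat n g w').submatrix eκ id * cableS (w'+1) V
          * ((Qmat n g w').submatrix eκ id)ᵀ
        = (Qmat n g w' * cableS (w'+1) V * (Qmat n g w')ᵀ).submatrix eκ eκ := by
      ext a b
      simp [Matrix.mul_apply, Matrix.submatrix_apply, Matrix.transpose_apply]
    have hre : Matrix.reindex (eκ.trans (Equiv.sumCongr eT eB)) (eκ.trans (Equiv.sumCongr eT eB))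
        ((Qmat n g w').submatrix eκ id * cableS (w'+1) V * ((Qmat n g w').submatrix eκ id)ᵀ)
        = Matrix.reindex (Equiv.sumCongr eT eB) (Equiv.sumCongr eT eB)
          (Qmat n g w' * cableS (w'+1) V * (Qmat n g w')ᵀ) := by
      rw [hPS]
      ext a b
      simp [Matrix.reindex_apply, Matrix.submatrix_apply]
    rw [hre]
    have htb : (Matrix.reindex (Equiv.sumCongr eT eB) (Equiv.sumCongr eT eB)
        (Qmat n g w' * cableS (w'+1) V * (Qmat n g w')ᵀ)).toBlocks₁₁
        = Matrix.reindex eT eT ((Qmat n g w' * cableS (w'+1) V * (Qmat n g w')ᵀ).toBlocks₁₁) := by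
      ext a b
      simp [Matrix.toBlocks₁₁, Matrix.reindex_apply, Matrix.submatrix_apply]
    rw [htb, alexPoly_reindex]
    have htop : (Qmat n g w' * cableS (w'+1) V * (Qmat n g w')ᵀ).toBlocks₁₁
        = Qtop n g w' * cableS (w'+1) V * (Qtop n g w')ᵀ := by
      have hQQ : ∀ α γ, Qmat n g w' (Sum.inl α) γ = Qtop n g w' α γ := by
        intro α γ
        rcases α with (p | (x | x)) <;> rfl
      ext a b
      simp [Matrix.toBlocks₁₁, Matrix.mul_apply, hQQ, Matrix.transpose_apply]
    rw [htop, alex_XT n g w' V hA hpp hqq hpq hcross, hkey]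
end
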